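/- arXiv:math/0006048 — 3 statements merged into one kernel-verified Lean document; each statement's English description precedes it below -/
import Mathlib

section
/- Let A be a bialgebra and M, N left-right Yetter-Drinfel'd modules over A. For (ω',ρ') ∈ Z^1(M,N), the sequence 0 → N → N⊕_{(ω',ρ')}M → M → 0 (with the canonical inclusion and projection) is an extension of M by N in the category of left-right Yetter-Drinfel'd modules, and every extension of M by N in this category is equivalent to one of this form. -/
open TensorProduct
noncomputable section

namespace PS

variable (k : Type) [Field k] (A : Type) [Ring A] [Bialgebra k A]

/-- Left-nested tensor powers with base `B`: `pwr B n = B ⊗ A ⊗ ⋯ ⊗ A` (`n` copies of `A`). -/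
def pwr (B : ModuleCat k) : ℕ → ModuleCat k
  | 0 => B
  | n + 1 => ModuleCat.of k (pwr B n ⊗[k] A)

/-- `A^{⊗ n}` realized as `pwr k n`, i.e. `k ⊗ A ⊗ ⋯ ⊗ A`. -/
abbrev Pk (n : ℕ) : ModuleCat k := pwr k A (ModuleCat.of k k) n

abbrev μA : A ⊗[k] A →ₗ[k] A := LinearMap.mul' k A
abbrev ΔA : A →ₗ[k] A ⊗[k] A := Coalgebra.comul
abbrev εA : A →ₗ[k] k := Coalgebra.counit

/-- Multiplication of the tensorands in slots `i` and `i+1` (`1 ≤ i ≤ n`);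
junk (zero map) for other `i`. -/
def mulP : (n : ℕ) → (i : ℕ) → ((Pk k A (n+1) : Type) →ₗ[k] Pk k A n)
  | 0, _ => 0
  | n + 1, i =>
      if i = n + 1 then
        (TensorProduct.map (LinearMap.id : (Pk k A n : Type) →ₗ[k] Pk k A n) (μA k A)).comp
          (TensorProduct.assoc k (Pk k A n) A A).toLinearMap
      else
        TensorProduct.map (mulP n i) (LinearMap.id : A →ₗ[k] A)

/-- Insert an `A`-factor at the innermost slot (slot 1). -/
def insP : (n : ℕ) → (A ⊗[k] (Pk k A n : Type)) ≃ₗ[k] (Pk k A (n+1) : Type)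
  | 0 => TensorProduct.comm k A k
  | n + 1 =>
      (TensorProduct.assoc k A (Pk k A n) A).symm.trans
        (TensorProduct.congr (insP n) (LinearEquiv.refl k A))

section NM

variable {N : Type} [AddCommGroup N] [Module k N]

/-- The left diagonal action of `A` on `N ⊗ A^{⊗ p}` built from a base action `ωN`. -/
def ldiag (ωN : A ⊗[k] N →ₗ[k] N) :
    (p : ℕ) → (A ⊗[k] (pwr k A (ModuleCat.of k N) p : Type) →ₗ[k] pwr k A (ModuleCat.of k N) p)
  | 0 => ωN
  | p + 1 =>
      (TensorProduct.map (ldiag ωN p) (μA k A)).comp <|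
        ((TensorProduct.tensorTensorTensorComm k A A
            (pwr k A (ModuleCat.of k N) p : Type) A).toLinearMap).comp
          (TensorProduct.map (ΔA k A) (LinearMap.id :
            ((pwr k A (ModuleCat.of k N) p : Type) ⊗[k] A) →ₗ[k] _))

/-- Right diagonal multiplication on the `A`-slots of `N ⊗ A^{⊗ p}` (counit on the base). -/
def rdiagE : (p : ℕ) →
    ((pwr k A (ModuleCat.of k N) p : Type) ⊗[k] A →ₗ[k] pwr k A (ModuleCat.of k N) p)
  | 0 => (TensorProduct.rid k N).toLinearMap.comp
      (TensorProduct.map (LinearMap.id : N →ₗ[k] N) (εA k A))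
  | p + 1 =>
      (TensorProduct.map (rdiagE p) (μA k A)).comp <|
        ((TensorProduct.tensorTensorTensorComm k
            (pwr k A (ModuleCat.of k N) p : Type) A A A).toLinearMap).comp
          (TensorProduct.map
            (LinearMap.id : ((pwr k A (ModuleCat.of k N) p : Type) ⊗[k] A) →ₗ[k] _) (ΔA k A))

/-- Right diagonal action on `N ⊗ A^{⊗ p}` built from a base (right) action `ωNr`. -/
def rdiagAct (ωNr : N ⊗[k] A →ₗ[k] N) : (p : ℕ) →
    ((pwr k A (ModuleCat.of k N) p : Type) ⊗[k] A →ₗ[k] pwr k A (ModuleCat.of k N) p)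
  | 0 => ωNr
  | p + 1 =>
      (TensorProduct.map (rdiagAct ωNr p) (μA k A)).comp <|
        ((TensorProduct.tensorTensorTensorComm k
            (pwr k A (ModuleCat.of k N) p : Type) A A A).toLinearMap).comp
          (TensorProduct.map
            (LinearMap.id : ((pwr k A (ModuleCat.of k N) p : Type) ⊗[k] A) →ₗ[k] _) (ΔA k A))

end NM

/-- `dL : A^{⊗ n} → A ⊗ A^{⊗ n}`, `a^1 ⊗ ⋯ ⊗ a^n ↦ Σ (a^1)_1 ⋯ (a^n)_1 ⊗ ((a^1)_2 ⊗ ⋯ ⊗ (a^n)_2)`. -/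
def dL : (n : ℕ) → ((Pk k A n : Type) →ₗ[k] A ⊗[k] (Pk k A n : Type))
  | 0 => (TensorProduct.map (Algebra.linearMap k A) (LinearMap.id : k →ₗ[k] k)).comp
      (TensorProduct.lid k k).symm.toLinearMap
  | n + 1 =>
      (TensorProduct.map (μA k A)
          (LinearMap.id : ((Pk k A n : Type) ⊗[k] A) →ₗ[k] _)).comp <|
        ((TensorProduct.tensorTensorTensorComm k A (Pk k A n : Type) A A).toLinearMap).comp
          (TensorProduct.map (dL n) (ΔA k A))

/-- `dR : A^{⊗ n} → A^{⊗ n} ⊗ A`, `a^1 ⊗ ⋯ ⊗ a^n ↦ Σ ((a^1)_1 ⊗ ⋯ ⊗ (a^n)_1) ⊗ (a^1)_2 ⋯ (a^n)_2`. -/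
def dR : (n : ℕ) → ((Pk k A n : Type) →ₗ[k] (Pk k A n : Type) ⊗[k] A)
  | 0 => (TensorProduct.map (LinearMap.id : k →ₗ[k] k) (Algebra.linearMap k A)).comp
      (TensorProduct.rid k k).symm.toLinearMap
  | n + 1 =>
      (TensorProduct.map
          (LinearMap.id : ((Pk k A n : Type) ⊗[k] A) →ₗ[k] _) (μA k A)).comp <|
        ((TensorProduct.tensorTensorTensorComm k (Pk k A n : Type) A A A).toLinearMap).comp
          (TensorProduct.map (dR n) (ΔA k A))

section Base

variable {N : Type} [AddCommGroup N] [Module k N]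

/-- Apply `ρN : N → N ⊗ A` to the base of `N ⊗ A^{⊗ p}`. -/
def rhoBase (ρN : N →ₗ[k] N ⊗[k] A) : (p : ℕ) →
    ((pwr k A (ModuleCat.of k N) p : Type) →ₗ[k] pwr k A (ModuleCat.of k (N ⊗[k] A)) p)
  | 0 => ρN
  | p + 1 => TensorProduct.map (rhoBase ρN p) (LinearMap.id : A →ₗ[k] A)

/-- Reinterpret `(N ⊗ A) ⊗ A^{⊗ p}` as `N ⊗ A^{⊗ (p+1)}`. -/
def shiftB : (p : ℕ) →
    ((pwr k A (ModuleCat.of k (N ⊗[k] A)) p : Type) ≃ₗ[k] pwr k A (ModuleCat.of k N) (p+1))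
  | 0 => LinearEquiv.refl k (N ⊗[k] A)
  | p + 1 => TensorProduct.congr (shiftB p) (LinearEquiv.refl k A)

/-- Multiply the `A`-component of the base `N ⊗ A` on the right by an element of `A`. -/
def rmulBase : (p : ℕ) →
    ((pwr k A (ModuleCat.of k (N ⊗[k] A)) p : Type) ⊗[k] A →ₗ[k]
      pwr k A (ModuleCat.of k (N ⊗[k] A)) p)
  | 0 => (TensorProduct.map (LinearMap.id : N →ₗ[k] N) (μA k A)).comp
      (TensorProduct.assoc k N A A).toLinearMap
  | p + 1 =>
      (TensorProduct.map (rmulBase p) (LinearMap.id : A →ₗ[k] A)).comp <|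
        ((TensorProduct.assoc k (pwr k A (ModuleCat.of k (N ⊗[k] A)) p : Type) A A).symm.toLinearMap).comp <|
          (TensorProduct.map
            (LinearMap.id : (pwr k A (ModuleCat.of k (N ⊗[k] A)) p : Type) →ₗ[k] _)
            (TensorProduct.comm k A A).toLinearMap).comp
            (TensorProduct.assoc k
              (pwr k A (ModuleCat.of k (N ⊗[k] A)) p : Type) A A).toLinearMap

/-- Apply the counit to the `A`-component of the base `N ⊗ A`. -/
def epsBase : (p : ℕ) →
    ((pwr k A (ModuleCat.of k (N ⊗[k] A)) p : Type) →ₗ[k] pwr k A (ModuleCat.of k N) p)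
  | 0 => (TensorProduct.rid k N).toLinearMap.comp
      (TensorProduct.map (LinearMap.id : N →ₗ[k] N) (εA k A))
  | p + 1 => TensorProduct.map (epsBase p) (LinearMap.id : A →ₗ[k] A)

/-- Apply `Δ` on the `i`-th `A`-slot (`1 ≤ i ≤ p`) of `N ⊗ A^{⊗ p}`; junk otherwise. -/
def comulAt : (p : ℕ) → (i : ℕ) →
    ((pwr k A (ModuleCat.of k N) p : Type) →ₗ[k] pwr k A (ModuleCat.of k N) (p+1))
  | 0, _ => 0
  | p + 1, i =>
      if i = p + 1 then
        ((TensorProduct.assoc k (pwr k A (ModuleCat.of k N) p : Type) A A).symm.toLinearMap).comp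
          (TensorProduct.map
            (LinearMap.id : (pwr k A (ModuleCat.of k N) p : Type) →ₗ[k] _) (ΔA k A))
      else
        TensorProduct.map (comulAt p i) (LinearMap.id : A →ₗ[k] A)

/-- Left coaction on `N ⊗ A^{⊗ p}` coming from a left coaction on the base. -/
def lcoBase (ρNl : N →ₗ[k] A ⊗[k] N) : (p : ℕ) →
    ((pwr k A (ModuleCat.of k N) p : Type) →ₗ[k]
      A ⊗[k] (pwr k A (ModuleCat.of k N) p : Type))
  | 0 => ρNl
  | p + 1 =>
      ((TensorProduct.assoc k A (pwr k A (ModuleCat.of k N) p : Type) A).toLinearMap).comp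
        (TensorProduct.map (lcoBase ρNl p) (LinearMap.id : A →ₗ[k] A))

end Base

section Bicomplex

variable {M N : Type} [AddCommGroup M] [Module k M] [AddCommGroup N] [Module k N]

/-- `A^{⊗ n} ⊗ M`, the domain of the `(n,p)` cochains. -/
abbrev Dm (M : Type) [AddCommGroup M] [Module k M] (n : ℕ) : Type :=
  (Pk k A n : Type) ⊗[k] M

/-- `N ⊗ A^{⊗ p}`. -/
abbrev Cd (N : Type) [AddCommGroup N] [Module k N] (p : ℕ) : Type :=
  (pwr k A (ModuleCat.of k N) p : Type)

/-- The space of `(n,p)` cochains `Hom(A^{⊗ n} ⊗ M, N ⊗ A^{⊗ p})`. -/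
abbrev Yc (M N : Type) [AddCommGroup M] [Module k M] [AddCommGroup N] [Module k N]
    (n p : ℕ) : Type := Dm k A M n →ₗ[k] Cd k A N p

variable (ωM : A ⊗[k] M →ₗ[k] M) (ρM : M →ₗ[k] M ⊗[k] A)
variable (ωN : A ⊗[k] N →ₗ[k] N) (ρN : N →ₗ[k] N ⊗[k] A)

/-- `b_0`: the face using the diagonal left action of `a^1` on `N ⊗ A^{⊗ p}`. -/
def face0 (n p : ℕ) (f : Yc k A M N n p) : Yc k A M N (n+1) p :=
  (ldiag k A ωN p).comp <|
    (TensorProduct.map (LinearMap.id : A →ₗ[k] A) f).comp <|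
      ((TensorProduct.assoc k A (Pk k A n : Type) M).toLinearMap).comp
        (TensorProduct.map (insP k A n).symm.toLinearMap (LinearMap.id : M →ₗ[k] M))

/-- `b_i`, `1 ≤ i ≤ n`: multiply the adjacent arguments `a^i a^{i+1}`. -/
def faceMid (n p : ℕ) (i : ℕ) (f : Yc k A M N n p) : Yc k A M N (n+1) p :=
  f.comp (TensorProduct.map (mulP k A n i) (LinearMap.id : M →ₗ[k] M))

/-- `b_{n+1}` in the Hopf-module case: `f(a^1 ⊗ ⋯ ⊗ a^n ⊗ a^{n+1}·m)`. -/
def faceLastH (n p : ℕ) (f : Yc k A M N n p) : Yc k A M N (n+1) p :=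
  f.comp <|
    (TensorProduct.map (LinearMap.id : (Pk k A n : Type) →ₗ[k] _) ωM).comp
      (TensorProduct.assoc k (Pk k A n : Type) A M).toLinearMap

/-- `b_{n+1}` in the Yetter-Drinfel'd case. -/
def faceLastYD (n p : ℕ) (f : Yc k A M N n p) : Yc k A M N (n+1) p :=
  (rdiagE k A p).comp <|
    ((TensorProduct.comm k A (Cd k A N p)).toLinearMap).comp <|
      (TensorProduct.map (LinearMap.id : A →ₗ[k] A)
        (f.comp (TensorProduct.map (LinearMap.id : (Pk k A n : Type) →ₗ[k] _) ωM))).comp <|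
        ((TensorProduct.leftComm k (Pk k A n : Type) A (A ⊗[k] M)).toLinearMap).comp <|
          (TensorProduct.map (LinearMap.id : (Pk k A n : Type) →ₗ[k] _)
            (TensorProduct.assoc k A A M).toLinearMap).comp <|
            ((TensorProduct.assoc k (Pk k A n : Type) (A ⊗[k] A) M).toLinearMap).comp
              (TensorProduct.map
                (TensorProduct.map (LinearMap.id : (Pk k A n : Type) →ₗ[k] _) (ΔA k A))
                (LinearMap.id : M →ₗ[k] M))

/-- The Yetter-Drinfel'd horizontal faces `b_i^{n,p}`, `0 ≤ i ≤ n+1`. -/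
def bYD (n p : ℕ) (i : ℕ) (f : Yc k A M N n p) : Yc k A M N (n+1) p :=
  if i = 0 then face0 k A ωN n p f
  else if i ≤ n then faceMid k A n p i f
  else faceLastYD k A ωM n p f

/-- The Hopf-module horizontal faces `b_i^{n,p}`, `0 ≤ i ≤ n+1`. -/
def bH (n p : ℕ) (i : ℕ) (f : Yc k A M N n p) : Yc k A M N (n+1) p :=
  if i = 0 then face0 k A ωN n p f
  else if i ≤ n then faceMid k A n p i f
  else faceLastH k A ωM n p f

/-- `c_0` in the Hopf-module case: apply `ρ_N` to the `N`-component of the output. -/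
def cof0H (n p : ℕ) (f : Yc k A M N n p) : Yc k A M N n (p+1) :=
  ((shiftB k A p).toLinearMap).comp ((rhoBase k A ρN p).comp f)

/-- `c_0` in the Yetter-Drinfel'd case. -/
def cof0YD (n p : ℕ) (f : Yc k A M N n p) : Yc k A M N n (p+1) :=
  ((shiftB k A p).toLinearMap).comp <|
    (rmulBase k A p).comp <|
      ((TensorProduct.comm k A
          (pwr k A (ModuleCat.of k (N ⊗[k] A)) p : Type)).toLinearMap).comp <|
        (TensorProduct.map (LinearMap.id : A →ₗ[k] A) ((rhoBase k A ρN p).comp f)).comp <|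
          ((TensorProduct.assoc k A (Pk k A n : Type) M).toLinearMap).comp
            (TensorProduct.map (dL k A n) (LinearMap.id : M →ₗ[k] M))

/-- `c_{p+1}`: uses the right comodule structure of `M`. -/
def cofLast (n p : ℕ) (f : Yc k A M N n p) : Yc k A M N n (p+1) :=
  (TensorProduct.map f (μA k A)).comp <|
    ((TensorProduct.tensorTensorTensorComm k (Pk k A n : Type) A M A).toLinearMap).comp
      (TensorProduct.map (dR k A n) ρM)

/-- The Yetter-Drinfel'd vertical cofaces `c_j^{n,p}`, `0 ≤ j ≤ p+1`. -/
def cYD (n p : ℕ) (j : ℕ) (f : Yc k A M N n p) : Yc k A M N n (p+1) :=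
  if j = 0 then cof0YD k A ρN n p f
  else if j ≤ p then (comulAt k A p j).comp f
  else cofLast k A ρM n p f

/-- The Hopf-module vertical cofaces `c_j^{n,p}`, `0 ≤ j ≤ p+1`. -/
def cH (n p : ℕ) (j : ℕ) (f : Yc k A M N n p) : Yc k A M N n (p+1) :=
  if j = 0 then cof0H k A ρN n p f
  else if j ≤ p then (comulAt k A p j).comp f
  else cofLast k A ρM n p f

/-- The horizontal differential (Yetter-Drinfel'd case). -/
def dmYD (n p : ℕ) (f : Yc k A M N n p) : Yc k A M N (n+1) p :=
  ∑ i ∈ Finset.range (n+2), ((-1 : ℤ)^i) • bYD k A ωM ωN n p i f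

/-- The vertical differential (Yetter-Drinfel'd case). -/
def dcYD (n p : ℕ) (f : Yc k A M N n p) : Yc k A M N n (p+1) :=
  ∑ j ∈ Finset.range (p+2), ((-1 : ℤ)^j) • cYD k A ρM ρN n p j f

/-- The horizontal differential (Hopf-module case). -/
def dmH (n p : ℕ) (f : Yc k A M N n p) : Yc k A M N (n+1) p :=
  ∑ i ∈ Finset.range (n+2), ((-1 : ℤ)^i) • bH k A ωM ωN n p i f

/-- The vertical differential (Hopf-module case). -/
def dcH (n p : ℕ) (f : Yc k A M N n p) : Yc k A M N n (p+1) :=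
  ∑ j ∈ Finset.range (p+2), ((-1 : ℤ)^j) • cH k A ρM ρN n p j f

end Bicomplex

section Structures

variable {M : Type} [AddCommGroup M] [Module k M]

/-- `(M, ωM)` is a left `A`-module. -/
def IsModule (ωM : A ⊗[k] M →ₗ[k] M) : Prop :=
  (∀ m : M, ωM ((1 : A) ⊗ₜ m) = m) ∧
  ∀ (a b : A) (m : M), ωM (a ⊗ₜ ωM (b ⊗ₜ m)) = ωM ((a * b) ⊗ₜ m)

/-- `(M, ρM)` is a right `A`-comodule. -/
def IsComodule (ρM : M →ₗ[k] M ⊗[k] A) : Prop :=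
  ((TensorProduct.rid k M).toLinearMap.comp
      ((TensorProduct.map (LinearMap.id : M →ₗ[k] M) (εA k A)).comp ρM) = LinearMap.id) ∧
  (TensorProduct.map ρM (LinearMap.id : A →ₗ[k] A)).comp ρM =
    ((TensorProduct.assoc k M A A).symm.toLinearMap).comp
      ((TensorProduct.map (LinearMap.id : M →ₗ[k] M) (ΔA k A)).comp ρM)

/-- The map `a ⊗ m ↦ Σ a_1·m_0 ⊗ a_2 m_1`. -/
def hopfRHS (ωM : A ⊗[k] M →ₗ[k] M) (ρM : M →ₗ[k] M ⊗[k] A) :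
    A ⊗[k] M →ₗ[k] M ⊗[k] A :=
  (TensorProduct.map ωM (μA k A)).comp <|
    ((TensorProduct.tensorTensorTensorComm k A A M A).toLinearMap).comp
      (TensorProduct.map (ΔA k A) ρM)

/-- The map `a ⊗ m ↦ Σ (a_2·m)_0 ⊗ (a_2·m)_1 a_1`. -/
def ydLHS (ωM : A ⊗[k] M →ₗ[k] M) (ρM : M →ₗ[k] M ⊗[k] A) :
    A ⊗[k] M →ₗ[k] M ⊗[k] A :=
  (TensorProduct.map (LinearMap.id : M →ₗ[k] M) (μA k A)).comp <|
    ((TensorProduct.assoc k M A A).toLinearMap).comp <|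
      ((TensorProduct.comm k A (M ⊗[k] A)).toLinearMap).comp <|
        (TensorProduct.map (LinearMap.id : A →ₗ[k] A) (ρM.comp ωM)).comp <|
          ((TensorProduct.assoc k A A M).toLinearMap).comp
            (TensorProduct.map (ΔA k A) (LinearMap.id : M →ₗ[k] M))

/-- `(M, ωM, ρM)` is a left-right Yetter-Drinfel'd module over `A`. -/
def IsYetterDrinfeld (ωM : A ⊗[k] M →ₗ[k] M) (ρM : M →ₗ[k] M ⊗[k] A) : Prop :=
  IsModule k A ωM ∧ IsComodule k A ρM ∧
    ydLHS k A ωM ρM = hopfRHS k A ωM ρM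

/-- `(M, ωM, ρM)` is a left-right Hopf module over `A`. -/
def IsHopfModule (ωM : A ⊗[k] M →ₗ[k] M) (ρM : M →ₗ[k] M ⊗[k] A) : Prop :=
  IsModule k A ωM ∧ IsComodule k A ρM ∧
    ρM.comp ωM = hopfRHS k A ωM ρM

end Structures


section Cocycles

variable (k : Type) [Field k] (A : Type) [Ring A] [Bialgebra k A]
variable {M N : Type} [AddCommGroup M] [Module k M] [AddCommGroup N] [Module k N]
variable (ωM : A ⊗[k] M →ₗ[k] M) (ρM : M →ₗ[k] M ⊗[k] A)
variable (ωN : A ⊗[k] N →ₗ[k] N) (ρN : N →ₗ[k] N ⊗[k] A)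

/-- First 1-cocycle condition:
`ω' ∘ (id ⊗ ω_M) + ω_N ∘ (id ⊗ ω') = ω' ∘ (μ ⊗ id)` (as maps `(A ⊗ A) ⊗ M → N`). -/
def Cocycle1 (ω' : A ⊗[k] M →ₗ[k] N) : Prop :=
  ω'.comp ((TensorProduct.map (LinearMap.id : A →ₗ[k] A) ωM).comp
      (TensorProduct.assoc k A A M).toLinearMap) +
    ωN.comp ((TensorProduct.map (LinearMap.id : A →ₗ[k] A) ω').comp
      (TensorProduct.assoc k A A M).toLinearMap) =
  ω'.comp (TensorProduct.map (μA k A) (LinearMap.id : M →ₗ[k] M))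

/-- Second 1-cocycle condition:
`(ρ' ⊗ id) ∘ ρ_M + (ρ_N ⊗ id) ∘ ρ' = (id ⊗ Δ) ∘ ρ'` (as maps `M → (N ⊗ A) ⊗ A`). -/
def Cocycle2 (ρ' : M →ₗ[k] N ⊗[k] A) : Prop :=
  (TensorProduct.map ρ' (LinearMap.id : A →ₗ[k] A)).comp ρM +
    (TensorProduct.map ρN (LinearMap.id : A →ₗ[k] A)).comp ρ' =
  ((TensorProduct.assoc k N A A).symm.toLinearMap).comp
    ((TensorProduct.map (LinearMap.id : N →ₗ[k] N) (ΔA k A)).comp ρ')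

/-- `a ⊗ m ↦ Σ ω(a_1 ⊗ m_0) ⊗ a_2 m_1`, i.e. `(ω ⊗ μ) ∘ (id ⊗ τ ⊗ id) ∘ (Δ ⊗ ρ)`. -/
def mixLHS (ω : A ⊗[k] M →ₗ[k] N) (ρ : M →ₗ[k] M ⊗[k] A) : A ⊗[k] M →ₗ[k] N ⊗[k] A :=
  (TensorProduct.map ω (μA k A)).comp <|
    ((TensorProduct.tensorTensorTensorComm k A A M A).toLinearMap).comp
      (TensorProduct.map (ΔA k A) ρ)

/-- `a ⊗ m ↦ Σ ω(a_1 ⊗ ρ'(m)-part)` : `(ω_N ⊗ μ) ∘ (id ⊗ τ_N ⊗ id) ∘ (Δ ⊗ ρ')`. -/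
def mixLHS' (ω : A ⊗[k] N →ₗ[k] N) (ρ' : M →ₗ[k] N ⊗[k] A) : A ⊗[k] M →ₗ[k] N ⊗[k] A :=
  (TensorProduct.map ω (μA k A)).comp <|
    ((TensorProduct.tensorTensorTensorComm k A A N A).toLinearMap).comp
      (TensorProduct.map (ΔA k A) ρ')

/-- `(id ⊗ μ) ∘ (ρ' ⊗ id) ∘ τ_M ∘ (id ⊗ ω) ∘ (Δ ⊗ id)`,
`a ⊗ m ↦ Σ ρ'(a_2·m)_0 ⊗ ρ'(a_2·m)_1 a_1`. -/
def mixRHS (ω : A ⊗[k] M →ₗ[k] M) (ρ' : M →ₗ[k] N ⊗[k] A) : A ⊗[k] M →ₗ[k] N ⊗[k] A :=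
  (TensorProduct.map (LinearMap.id : N →ₗ[k] N) (μA k A)).comp <|
    ((TensorProduct.assoc k N A A).toLinearMap).comp <|
      (TensorProduct.map ρ' (LinearMap.id : A →ₗ[k] A)).comp <|
        ((TensorProduct.comm k A M).toLinearMap).comp <|
          (TensorProduct.map (LinearMap.id : A →ₗ[k] A) ω).comp <|
            ((TensorProduct.assoc k A A M).toLinearMap).comp
              (TensorProduct.map (ΔA k A) (LinearMap.id : M →ₗ[k] M))

/-- `(id ⊗ μ) ∘ (ρ_N ⊗ id) ∘ τ_N ∘ (id ⊗ ω') ∘ (Δ ⊗ id)`. -/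
def mixRHS' (ω' : A ⊗[k] M →ₗ[k] N) (ρ : N →ₗ[k] N ⊗[k] A) : A ⊗[k] M →ₗ[k] N ⊗[k] A :=
  (TensorProduct.map (LinearMap.id : N →ₗ[k] N) (μA k A)).comp <|
    ((TensorProduct.assoc k N A A).toLinearMap).comp <|
      (TensorProduct.map ρ (LinearMap.id : A →ₗ[k] A)).comp <|
        ((TensorProduct.comm k A N).toLinearMap).comp <|
          (TensorProduct.map (LinearMap.id : A →ₗ[k] A) ω').comp <|
            ((TensorProduct.assoc k A A M).toLinearMap).comp
              (TensorProduct.map (ΔA k A) (LinearMap.id : M →ₗ[k] M))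

/-- Third 1-cocycle condition in the Yetter-Drinfel'd case. -/
def Cocycle3YD (ω' : A ⊗[k] M →ₗ[k] N) (ρ' : M →ₗ[k] N ⊗[k] A) : Prop :=
  mixLHS k A ω' ρM + mixLHS' k A ωN ρ' = mixRHS k A ωM ρ' + mixRHS' k A ω' ρN

/-- Third 1-cocycle condition in the Hopf-module case. -/
def Cocycle3H (ω' : A ⊗[k] M →ₗ[k] N) (ρ' : M →ₗ[k] N ⊗[k] A) : Prop :=
  mixLHS k A ω' ρM + mixLHS' k A ωN ρ' = ρ'.comp ωM + ρN.comp ω'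

/-- `Z^1(M,N)` for Yetter-Drinfel'd modules. -/
def Z1YD (ω' : A ⊗[k] M →ₗ[k] N) (ρ' : M →ₗ[k] N ⊗[k] A) : Prop :=
  Cocycle1 k A ωM ωN ω' ∧ Cocycle2 k A ρM ρN ρ' ∧ Cocycle3YD k A ωM ρM ωN ρN ω' ρ'

/-- `Z^1(M,N)` for Hopf modules. -/
def Z1H (ω' : A ⊗[k] M →ₗ[k] N) (ρ' : M →ₗ[k] N ⊗[k] A) : Prop :=
  Cocycle1 k A ωM ωN ω' ∧ Cocycle2 k A ρM ρN ρ' ∧ Cocycle3H k A ωM ρM ωN ρN ω' ρ'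

/-- `B^1(M,N)`: the pair is `(d_m(f), d_c(f))` for some `f : M → N`. -/
def B1 (ω' : A ⊗[k] M →ₗ[k] N) (ρ' : M →ₗ[k] N ⊗[k] A) : Prop :=
  ∃ f : M →ₗ[k] N,
    ω' = ωN.comp (TensorProduct.map (LinearMap.id : A →ₗ[k] A) f) - f.comp ωM ∧
    ρ' = ρN.comp f - (TensorProduct.map f (LinearMap.id : A →ₗ[k] A)).comp ρM

/-- The action of the extension `N ⊕_{(ω',ρ')} M`: `a·(n,m) = (a·n + ω'(a⊗m), a·m)`. -/
def sumAct (ω' : A ⊗[k] M →ₗ[k] N) : A ⊗[k] (N × M) →ₗ[k] N × M :=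
  LinearMap.prod
    (ωN.comp (TensorProduct.map (LinearMap.id : A →ₗ[k] A) (LinearMap.fst k N M)) +
      ω'.comp (TensorProduct.map (LinearMap.id : A →ₗ[k] A) (LinearMap.snd k N M)))
    (ωM.comp (TensorProduct.map (LinearMap.id : A →ₗ[k] A) (LinearMap.snd k N M)))

/-- The coaction of the extension `N ⊕_{(ω',ρ')} M`:
`λ(n,m) = ρ_N(n) + ρ'(m) + ρ_M(m)`. -/
def sumCo (ρ' : M →ₗ[k] N ⊗[k] A) : (N × M) →ₗ[k] (N × M) ⊗[k] A :=
  (TensorProduct.map (LinearMap.inl k N M) (LinearMap.id : A →ₗ[k] A)).comp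
      (ρN.comp (LinearMap.fst k N M)) +
    (TensorProduct.map (LinearMap.inl k N M) (LinearMap.id : A →ₗ[k] A)).comp
      (ρ'.comp (LinearMap.snd k N M)) +
    (TensorProduct.map (LinearMap.inr k N M) (LinearMap.id : A →ₗ[k] A)).comp
      (ρM.comp (LinearMap.snd k N M))

/-- A linear map is a morphism for the given module/comodule structures. -/
def IsBicompatHom {X Y : Type} [AddCommGroup X] [Module k X] [AddCommGroup Y] [Module k Y]
    (ωX : A ⊗[k] X →ₗ[k] X) (ρX : X →ₗ[k] X ⊗[k] A)
    (ωY : A ⊗[k] Y →ₗ[k] Y) (ρY : Y →ₗ[k] Y ⊗[k] A) (f : X →ₗ[k] Y) : Prop :=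
  f.comp ωX = ωY.comp (TensorProduct.map (LinearMap.id : A →ₗ[k] A) f) ∧
    ρY.comp f = (TensorProduct.map f (LinearMap.id : A →ₗ[k] A)).comp ρX

end Cocycles

section ExtAux

open TensorProduct LinearMap

variable {k : Type} [Field k] {A : Type} [Ring A] [Bialgebra k A]
variable {X Y Z W X' Y' Z' W' : Type}
  [AddCommGroup X] [Module k X] [AddCommGroup Y] [Module k Y]
  [AddCommGroup Z] [Module k Z] [AddCommGroup W] [Module k W]
  [AddCommGroup X'] [Module k X'] [AddCommGroup Y'] [Module k Y']
  [AddCommGroup Z'] [Module k Z'] [AddCommGroup W'] [Module k W']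

lemma mapL_comp (f : Y →ₗ[k] Z) (g : X →ₗ[k] Y) :
    (map (f ∘ₗ g) (LinearMap.id : A →ₗ[k] A)) = map f LinearMap.id ∘ₗ map g LinearMap.id := by
  ext x a; simp

/-- `Ymap f : a ⊗ x ↦ Σ f(a₂ ⊗ x)₀ ⊗ f(a₂⊗x)₁ a₁`. -/
def Ymap (f : A ⊗[k] X →ₗ[k] Y ⊗[k] A) : A ⊗[k] X →ₗ[k] Y ⊗[k] A :=
  (map LinearMap.id (LinearMap.mul' k A)).comp <|
    ((TensorProduct.assoc k Y A A).toLinearMap).comp <|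
      ((TensorProduct.comm k A (Y ⊗[k] A)).toLinearMap).comp <|
        (map LinearMap.id f).comp <|
          ((TensorProduct.assoc k A A X).toLinearMap).comp
            (map Coalgebra.comul LinearMap.id)

/-- `Lmap ω ρ : a ⊗ x ↦ Σ ω(a₁ ⊗ ρ(x)₀) ⊗ a₂ ρ(x)₁`. -/
def Lmap (ω : A ⊗[k] W →ₗ[k] Y) (ρ : X →ₗ[k] W ⊗[k] A) : A ⊗[k] X →ₗ[k] Y ⊗[k] A :=
  (map ω (LinearMap.mul' k A)).comp <|
    ((tensorTensorTensorComm k A A W A).toLinearMap).comp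
      (map Coalgebra.comul ρ)

/-- `Dmap : x ⊗ a ↦ Σ (x ⊗ a₁) ⊗ a₂`. -/
def Dmap : X ⊗[k] A →ₗ[k] (X ⊗[k] A) ⊗[k] A :=
  ((TensorProduct.assoc k X A A).symm.toLinearMap).comp
    (map LinearMap.id Coalgebra.comul)

/-- `Fc : x ⊗ a ↦ ε(a) x`. -/
def Fc : X ⊗[k] A →ₗ[k] X :=
  (TensorProduct.rid k X).toLinearMap.comp (map LinearMap.id Coalgebra.counit)

lemma Yadd (f g : A ⊗[k] X →ₗ[k] Y ⊗[k] A) : Ymap (f + g) = Ymap f + Ymap g := by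
  unfold Ymap
  rw [TensorProduct.map_add_right]
  simp only [LinearMap.add_comp, LinearMap.comp_add]

lemma Ynat (h : Y →ₗ[k] Y') (f : A ⊗[k] X →ₗ[k] Y ⊗[k] A) :
    Ymap ((map h LinearMap.id) ∘ₗ f) = (map h LinearMap.id) ∘ₗ Ymap f := by
  apply TensorProduct.ext'
  intro a x
  simp only [Ymap, LinearMap.comp_apply, map_tmul, LinearMap.id_apply]
  generalize (Coalgebra.comul (R := k) a) = t
  induction t using TensorProduct.induction_on with
  | zero => simp
  | tmul a1 a2 =>
      simp only [LinearEquiv.coe_coe, assoc_tmul, map_tmul, LinearMap.id_apply,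
        LinearMap.comp_apply]
      generalize f (a2 ⊗ₜ[k] x) = u
      induction u using TensorProduct.induction_on with
      | zero => simp
      | tmul y c => simp
      | add u v hu hv =>
          simp only [comm_tmul] at hu hv
          simp [tmul_add, hu, hv]
  | add s t hs ht => simp only [map_add, add_tmul, hs, ht]

lemma Yprecomp (f : A ⊗[k] X →ₗ[k] Y ⊗[k] A) (g : X' →ₗ[k] X) :
    Ymap (f ∘ₗ (map LinearMap.id g)) = Ymap f ∘ₗ (map LinearMap.id g) := by
  apply TensorProduct.ext'
  intro a x
  simp only [Ymap, LinearMap.comp_apply, map_tmul, LinearMap.id_apply]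
  generalize (Coalgebra.comul (R := k) a) = t
  induction t using TensorProduct.induction_on with
  | zero => simp
  | tmul a1 a2 => simp
  | add s t hs ht => simp only [map_add, add_tmul, hs, ht]

lemma Ladd_left (ω₁ ω₂ : A ⊗[k] W →ₗ[k] Y) (ρ : X →ₗ[k] W ⊗[k] A) :
    Lmap (ω₁ + ω₂) ρ = Lmap ω₁ ρ + Lmap ω₂ ρ := by
  unfold Lmap
  rw [TensorProduct.map_add_left]
  simp only [LinearMap.add_comp, LinearMap.comp_add]

lemma Ladd_right (ω : A ⊗[k] W →ₗ[k] Y) (ρ₁ ρ₂ : X →ₗ[k] W ⊗[k] A) :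
    Lmap ω (ρ₁ + ρ₂) = Lmap ω ρ₁ + Lmap ω ρ₂ := by
  unfold Lmap
  rw [TensorProduct.map_add_right]
  simp only [LinearMap.add_comp, LinearMap.comp_add]

lemma Lpost (h : Y →ₗ[k] Y') (ω : A ⊗[k] W →ₗ[k] Y) (ρ : X →ₗ[k] W ⊗[k] A) :
    Lmap (h ∘ₗ ω) ρ = (map h LinearMap.id) ∘ₗ Lmap ω ρ := by
  apply TensorProduct.ext'
  intro a x
  simp only [Lmap, LinearMap.comp_apply, map_tmul, LinearMap.id_apply]
  generalize (Coalgebra.comul (R := k) a) = t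
  induction t using TensorProduct.induction_on with
  | zero => simp
  | tmul a1 a2 =>
      generalize ρ x = u
      induction u using TensorProduct.induction_on with
      | zero => simp
      | tmul w c => simp
      | add u v hu hv => simp only [tmul_add, map_add, hu, hv]
  | add s t hs ht => simp only [map_add, add_tmul, hs, ht]

lemma Lshift (ω : A ⊗[k] W →ₗ[k] Y) (g : W' →ₗ[k] W) (ρ : X →ₗ[k] W' ⊗[k] A) :
    Lmap (ω ∘ₗ map LinearMap.id g) ρ = Lmap ω ((map g LinearMap.id) ∘ₗ ρ) := by
  apply TensorProduct.ext'
  intro a x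
  simp only [Lmap, LinearMap.comp_apply, map_tmul, LinearMap.id_apply]
  generalize (Coalgebra.comul (R := k) a) = t
  induction t using TensorProduct.induction_on with
  | zero => simp
  | tmul a1 a2 =>
      generalize ρ x = u
      induction u using TensorProduct.induction_on with
      | zero => simp
      | tmul w c => simp
      | add u v hu hv => simp only [tmul_add, map_add, hu, hv]
  | add s t hs ht => simp only [map_add, add_tmul, hs, ht]

lemma Lprecomp (ω : A ⊗[k] W →ₗ[k] Y) (ρ : X →ₗ[k] W ⊗[k] A) (u : X' →ₗ[k] X) :
    Lmap ω (ρ ∘ₗ u) = Lmap ω ρ ∘ₗ (map LinearMap.id u) := by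
  apply TensorProduct.ext'
  intro a x
  simp [Lmap]

lemma Dnat (f : X →ₗ[k] Y) :
    (Dmap (k := k) (A := A) (X := Y)) ∘ₗ (map f LinearMap.id)
      = map (map f LinearMap.id) LinearMap.id ∘ₗ Dmap := by
  apply TensorProduct.ext'
  intro x a
  simp only [Dmap, LinearMap.comp_apply, map_tmul, LinearMap.id_apply]
  generalize (Coalgebra.comul (R := k) a) = t
  induction t using TensorProduct.induction_on with
  | zero => simp
  | tmul a1 a2 => simp
  | add s t hs ht => simp only [tmul_add, map_add, hs, ht]

lemma Fnat (f : X →ₗ[k] Y) :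
    (Fc (k := k) (A := A) (X := Y)) ∘ₗ (map f LinearMap.id) = f ∘ₗ Fc := by
  ext x a; simp [Fc]

lemma FD : (map (Fc (k := k) (A := A) (X := X)) (LinearMap.id : A →ₗ[k] A)) ∘ₗ Dmap
    = LinearMap.id := by
  apply TensorProduct.ext'
  intro x a
  have h : ∀ t : A ⊗[k] A,
      (map (Fc (k := k) (A := A) (X := X)) LinearMap.id)
          ((TensorProduct.assoc k X A A).symm (x ⊗ₜ[k] t))
        = x ⊗ₜ[k] (TensorProduct.lid k A) (Coalgebra.counit.rTensor A t) := by
    intro t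
    induction t using TensorProduct.induction_on with
    | zero => simp
    | tmul a1 a2 => simp [Fc, smul_tmul, tmul_smul]
    | add s t hs ht => simp only [tmul_add, map_add, hs, ht]
  simp only [Dmap, LinearMap.comp_apply, map_tmul, LinearMap.id_apply,
    LinearEquiv.coe_coe, h]
  rw [Coalgebra.rTensor_counit_comul]
  simp

end ExtAux

section ExtAux2
open TensorProduct LinearMap

variable {k : Type} [Field k] {A : Type} [Ring A] [Bialgebra k A]
variable {M N : Type} [AddCommGroup M] [Module k M] [AddCommGroup N] [Module k N]

lemma ydLHS_eq (ω : A ⊗[k] M →ₗ[k] M) (ρ : M →ₗ[k] M ⊗[k] A) :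
    ydLHS k A ω ρ = Ymap (ρ ∘ₗ ω) := rfl

lemma hopfRHS_eq (ω : A ⊗[k] M →ₗ[k] M) (ρ : M →ₗ[k] M ⊗[k] A) :
    hopfRHS k A ω ρ = Lmap ω ρ := rfl

lemma mixLHS_eq (ω : A ⊗[k] M →ₗ[k] N) (ρ : M →ₗ[k] M ⊗[k] A) :
    mixLHS k A ω ρ = Lmap ω ρ := rfl

lemma mixLHS'_eq (ω : A ⊗[k] N →ₗ[k] N) (ρ : M →ₗ[k] N ⊗[k] A) :
    mixLHS' k A ω ρ = Lmap ω ρ := rfl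

lemma isComodule_iff (ρ : M →ₗ[k] M ⊗[k] A) :
    IsComodule k A ρ ↔ (Fc ∘ₗ ρ = LinearMap.id ∧
      (map ρ LinearMap.id) ∘ₗ ρ = Dmap ∘ₗ ρ) := Iff.rfl

lemma cocycle2_iff (ρM : M →ₗ[k] M ⊗[k] A) (ρN : N →ₗ[k] N ⊗[k] A)
    (ρ' : M →ₗ[k] N ⊗[k] A) :
    Cocycle2 k A ρM ρN ρ' ↔
      (map ρ' LinearMap.id) ∘ₗ ρM + (map ρN LinearMap.id) ∘ₗ ρ' = Dmap ∘ₗ ρ' := Iff.rfl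

lemma mixRHS_eq (ω : A ⊗[k] M →ₗ[k] M) (ρ' : M →ₗ[k] N ⊗[k] A) :
    mixRHS k A ω ρ' = Ymap (ρ' ∘ₗ ω) := by
  apply TensorProduct.ext'
  intro a x
  simp only [mixRHS, Ymap, LinearMap.comp_apply, map_tmul, LinearMap.id_apply]
  generalize (Coalgebra.comul (R := k) a) = t
  induction t using TensorProduct.induction_on with
  | zero => simp
  | tmul a1 a2 =>
      simp only [LinearEquiv.coe_coe, assoc_tmul, map_tmul, LinearMap.id_apply,
        comm_tmul, LinearMap.comp_apply]
  | add s t hs ht => simp only [map_add, add_tmul, hs, ht]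

lemma mixRHS'_eq (ω' : A ⊗[k] M →ₗ[k] N) (ρ : N →ₗ[k] N ⊗[k] A) :
    mixRHS' k A ω' ρ = Ymap (ρ ∘ₗ ω') := by
  apply TensorProduct.ext'
  intro a x
  simp only [mixRHS', Ymap, LinearMap.comp_apply, map_tmul, LinearMap.id_apply]
  generalize (Coalgebra.comul (R := k) a) = t
  induction t using TensorProduct.induction_on with
  | zero => simp
  | tmul a1 a2 =>
      simp only [LinearEquiv.coe_coe, assoc_tmul, map_tmul, LinearMap.id_apply,
        comm_tmul, LinearMap.comp_apply]
  | add s t hs ht => simp only [map_add, add_tmul, hs, ht]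

end ExtAux2

section ExtAux3
open TensorProduct LinearMap

variable {k : Type} [Field k] {A : Type} [Ring A] [Bialgebra k A]
variable {M N : Type} [AddCommGroup M] [Module k M] [AddCommGroup N] [Module k N]
variable (ωM : A ⊗[k] M →ₗ[k] M) (ρM : M →ₗ[k] M ⊗[k] A)
variable (ωN : A ⊗[k] N →ₗ[k] N) (ρN : N →ₗ[k] N ⊗[k] A)
variable (ω' : A ⊗[k] M →ₗ[k] N) (ρ' : M →ₗ[k] N ⊗[k] A)

lemma sumAct_apply (a : A) (n : N) (m : M) :
    sumAct k A ωM ωN ω' (a ⊗ₜ[k] (n, m))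
      = (ωN (a ⊗ₜ n) + ω' (a ⊗ₜ m), ωM (a ⊗ₜ m)) := by
  simp [sumAct]

lemma sumCo_apply (n : N) (m : M) :
    sumCo k A ρM ρN ρ' (n, m)
      = map (inl k N M) LinearMap.id (ρN n) + map (inl k N M) LinearMap.id (ρ' m)
        + map (inr k N M) LinearMap.id (ρM m) := by
  simp [sumCo]

lemma prodCases {P : Type} [AddCommGroup P] [Module k P] {f g : (N × M) →ₗ[k] P}
    (h1 : f ∘ₗ inl k N M = g ∘ₗ inl k N M) (h2 : f ∘ₗ inr k N M = g ∘ₗ inr k N M) :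
    f = g := by
  apply LinearMap.ext; rintro ⟨n, m⟩
  have hx : ((n, m) : N × M) = inl k N M n + inr k N M m := by simp
  have e1 := LinearMap.congr_fun h1 n
  have e2 := LinearMap.congr_fun h2 m
  simp only [comp_apply] at e1 e2
  rw [hx, map_add, map_add, e1, e2]

lemma tensorRCases {P Q : Type} [AddCommGroup P] [Module k P] [AddCommGroup Q] [Module k Q]
    {f g : Q ⊗[k] (N × M) →ₗ[k] P}
    (h1 : f ∘ₗ map LinearMap.id (inl k N M) = g ∘ₗ map LinearMap.id (inl k N M))
    (h2 : f ∘ₗ map LinearMap.id (inr k N M) = g ∘ₗ map LinearMap.id (inr k N M)) :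
    f = g := by
  apply TensorProduct.ext'; rintro q ⟨n, m⟩
  have hx : (q ⊗ₜ[k] ((n, m) : N × M))
      = map LinearMap.id (inl k N M) (q ⊗ₜ n) + map LinearMap.id (inr k N M) (q ⊗ₜ m) := by
    simp [← tmul_add]
  have e1 := LinearMap.congr_fun h1 (q ⊗ₜ[k] n)
  have e2 := LinearMap.congr_fun h2 (q ⊗ₜ[k] m)
  simp only [comp_apply] at e1 e2
  rw [hx, map_add, map_add, e1, e2]

lemma killNN : map (fst k N M) (LinearMap.id : A →ₗ[k] A) ∘ₗ map (inl k N M) LinearMap.id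
    = LinearMap.id := by ext n a; simp

lemma killNM : map (fst k N M) (LinearMap.id : A →ₗ[k] A) ∘ₗ map (inr k N M) LinearMap.id
    = 0 := by ext m a; simp

lemma killNN2 : map (map (fst k N M) (LinearMap.id : A →ₗ[k] A)) (LinearMap.id : A →ₗ[k] A)
    ∘ₗ map (map (inl k N M) LinearMap.id) LinearMap.id = LinearMap.id := by
  ext n a b; simp

lemma killNM2 : map (map (fst k N M) (LinearMap.id : A →ₗ[k] A)) (LinearMap.id : A →ₗ[k] A)
    ∘ₗ map (map (inr k N M) LinearMap.id) LinearMap.id = 0 := by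
  ext m a b; simp

lemma sumAct_inl : sumAct k A ωM ωN ω' ∘ₗ map LinearMap.id (inl k N M)
    = inl k N M ∘ₗ ωN := by
  apply TensorProduct.ext'; intro a n
  simp [sumAct_apply]

lemma sumAct_inr : sumAct k A ωM ωN ω' ∘ₗ map LinearMap.id (inr k N M)
    = inl k N M ∘ₗ ω' + inr k N M ∘ₗ ωM := by
  apply TensorProduct.ext'; intro a m
  simp [sumAct_apply]

lemma sumCo_inl : sumCo k A ρM ρN ρ' ∘ₗ inl k N M
    = map (inl k N M) LinearMap.id ∘ₗ ρN := by
  ext n; simp [sumCo_apply]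

lemma sumCo_inr : sumCo k A ρM ρN ρ' ∘ₗ inr k N M
    = map (inl k N M) LinearMap.id ∘ₗ ρ' + map (inr k N M) LinearMap.id ∘ₗ ρM := by
  ext m; simp [sumCo_apply]

lemma cocycle1_iff : Cocycle1 k A ωM ωN ω' ↔
    ∀ (a b : A) (m : M),
      ω' (a ⊗ₜ ωM (b ⊗ₜ m)) + ωN (a ⊗ₜ ω' (b ⊗ₜ m)) = ω' ((a * b) ⊗ₜ m) := by
  constructor
  · intro h a b m
    have := LinearMap.congr_fun h ((a ⊗ₜ[k] b) ⊗ₜ[k] m)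
    simpa using this
  · intro h
    apply TensorProduct.ext_threefold
    intro a b m
    simpa using h a b m

lemma isModule_sum_iff (hM : IsModule k A ωM) (hN : IsModule k A ωN) :
    IsModule k A (sumAct k A ωM ωN ω') ↔ Cocycle1 k A ωM ωN ω' := by
  rw [cocycle1_iff]
  constructor
  · intro hS a b m
    have h2 := hS.2 a b (0, m)
    simp only [sumAct_apply, tmul_zero, map_zero, zero_add] at h2
    have hfst := congrArg Prod.fst h2
    simp only at hfst
    rw [add_comm] at hfst
    exact hfst
  · intro hc
    constructor
    · rintro ⟨n, m⟩
      have h0 : ω' ((1 : A) ⊗ₜ[k] m) = 0 := by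
        have h1 := hc 1 1 m
        rw [hM.1 m, hN.1, one_mul] at h1
        exact add_eq_left.mp h1
      simp [sumAct_apply, h0, hN.1 n, hM.1 m]
    · intro a b
      rintro ⟨n, m⟩
      have hfst : ωN (a ⊗ₜ (ωN (b ⊗ₜ n) + ω' (b ⊗ₜ m))) + ω' (a ⊗ₜ ωM (b ⊗ₜ m))
          = ωN ((a * b) ⊗ₜ n) + ω' ((a * b) ⊗ₜ m) := by
        rw [tmul_add, map_add, hN.2 a b n, add_assoc,
          add_comm (ωN (a ⊗ₜ ω' (b ⊗ₜ m))) (ω' (a ⊗ₜ ωM (b ⊗ₜ m))), hc a b m]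
      simp only [sumAct_apply]
      exact Prod.ext hfst (hM.2 a b m)

end ExtAux3

section ExtAux4
open TensorProduct LinearMap

variable {k : Type} [Field k] {A : Type} [Ring A] [Bialgebra k A]
variable {M N : Type} [AddCommGroup M] [Module k M] [AddCommGroup N] [Module k N]
variable (ωM : A ⊗[k] M →ₗ[k] M) (ρM : M →ₗ[k] M ⊗[k] A)
variable (ωN : A ⊗[k] N →ₗ[k] N) (ρN : N →ₗ[k] N ⊗[k] A)
variable (ω' : A ⊗[k] M →ₗ[k] N) (ρ' : M →ₗ[k] N ⊗[k] A)

lemma mA : map (sumCo k A ρM ρN ρ') (LinearMap.id : A →ₗ[k] A) ∘ₗ map (inl k N M) LinearMap.id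
    = map (map (inl k N M) LinearMap.id) LinearMap.id ∘ₗ map ρN LinearMap.id := by
  apply TensorProduct.ext'; intro n a
  simp [sumCo_apply]

lemma mB : map (sumCo k A ρM ρN ρ') (LinearMap.id : A →ₗ[k] A) ∘ₗ map (inr k N M) LinearMap.id
    = map (map (inl k N M) LinearMap.id) LinearMap.id ∘ₗ map ρ' LinearMap.id
      + map (map (inr k N M) LinearMap.id) LinearMap.id ∘ₗ map ρM LinearMap.id := by
  apply TensorProduct.ext'; intro m a
  simp [sumCo_apply, add_tmul]

lemma eps_rho' (cM1 : Fc ∘ₗ ρM = LinearMap.id) (cN1 : Fc ∘ₗ ρN = LinearMap.id)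
    (c2 : map ρ' LinearMap.id ∘ₗ ρM + map ρN LinearMap.id ∘ₗ ρ' = Dmap ∘ₗ ρ') :
    Fc ∘ₗ ρ' = 0 := by
  have hid : map (Fc ∘ₗ ρN) (LinearMap.id : A →ₗ[k] A) = LinearMap.id := by
    rw [cN1]; exact TensorProduct.map_id
  have fd : ∀ t : N ⊗[k] A, map (Fc (k := k) (A := A) (X := N)) LinearMap.id (Dmap t) = t := by
    intro t; have := LinearMap.congr_fun (FD (k := k) (A := A) (X := N)) t; simpa using this
  have mc1 : ∀ t : M ⊗[k] A, map (Fc (k := k) (A := A) (X := N)) LinearMap.id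
      (map ρ' LinearMap.id t) = map (Fc ∘ₗ ρ') LinearMap.id t := by
    intro t; have := LinearMap.congr_fun (mapL_comp (k := k) (A := A) Fc ρ') t
    simpa using this.symm
  have mcN : ∀ t : N ⊗[k] A, map (Fc (k := k) (A := A) (X := N)) LinearMap.id
      (map ρN LinearMap.id t) = t := by
    intro t
    have h1 := LinearMap.congr_fun (mapL_comp (k := k) (A := A) Fc ρN) t
    have h2 := LinearMap.congr_fun hid t
    simp only [comp_apply, LinearMap.id_apply] at h1 h2
    rw [← h1, h2]
  have hz : ∀ m : M, map (Fc ∘ₗ ρ') (LinearMap.id : A →ₗ[k] A) (ρM m) = 0 := by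
    intro m
    have e := LinearMap.congr_fun c2 m
    simp only [comp_apply, LinearMap.add_apply] at e
    have e2 := congrArg (map (Fc (k := k) (A := A) (X := N)) LinearMap.id) e
    simp only [map_add, mc1, mcN, fd] at e2
    -- e2 : map (Fc ∘ₗ ρ') id (ρM m) + ρ' m = ρ' m
    simpa using add_eq_right.mp e2
  apply LinearMap.ext; intro m
  have h1 := LinearMap.congr_fun (Fnat (Fc ∘ₗ ρ')) (ρM m)
  simp only [comp_apply] at h1
  rw [hz m, map_zero] at h1
  have h2 := LinearMap.congr_fun cM1 m
  simp only [comp_apply, LinearMap.id_apply] at h2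
  rw [h2] at h1
  simp only [LinearMap.zero_apply]
  exact h1.symm

lemma counit_sum (cM1 : Fc ∘ₗ ρM = LinearMap.id) (cN1 : Fc ∘ₗ ρN = LinearMap.id)
    (heps : Fc ∘ₗ ρ' = 0) :
    Fc ∘ₗ sumCo k A ρM ρN ρ' = LinearMap.id := by
  apply LinearMap.ext; rintro ⟨n, m⟩
  have fN := LinearMap.congr_fun (Fnat (k := k) (A := A) (inl k N M)) 
  have fM := LinearMap.congr_fun (Fnat (k := k) (A := A) (inr k N M))
  simp only [comp_apply] at fN fM
  have c1 := LinearMap.congr_fun cM1 m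
  have c2 := LinearMap.congr_fun cN1 n
  have c3 := LinearMap.congr_fun heps m
  simp only [comp_apply, LinearMap.id_apply, LinearMap.zero_apply] at c1 c2 c3
  simp only [comp_apply, sumCo_apply, map_add, fN, fM, c1, c2, c3, map_zero]
  simp

lemma coassoc_sum (cN2 : map ρN LinearMap.id ∘ₗ ρN = Dmap ∘ₗ ρN)
    (cM2 : map ρM LinearMap.id ∘ₗ ρM = Dmap ∘ₗ ρM)
    (c2 : map ρ' LinearMap.id ∘ₗ ρM + map ρN LinearMap.id ∘ₗ ρ' = Dmap ∘ₗ ρ') :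
    map (sumCo k A ρM ρN ρ') LinearMap.id ∘ₗ sumCo k A ρM ρN ρ'
      = Dmap ∘ₗ sumCo k A ρM ρN ρ' := by
  have mAe : ∀ t : N ⊗[k] A, map (sumCo k A ρM ρN ρ') (LinearMap.id : A →ₗ[k] A) (map (inl k N M) LinearMap.id t)
      = map (map (inl k N M) LinearMap.id) LinearMap.id (map ρN LinearMap.id t) := by
    intro t; have := LinearMap.congr_fun (mA ρM ρN ρ') t; simpa using this
  have mBe : ∀ t : M ⊗[k] A, map (sumCo k A ρM ρN ρ') (LinearMap.id : A →ₗ[k] A) (map (inr k N M) LinearMap.id t)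
      = map (map (inl k N M) LinearMap.id) LinearMap.id (map ρ' LinearMap.id t)
        + map (map (inr k N M) LinearMap.id) LinearMap.id (map ρM LinearMap.id t) := by
    intro t; have := LinearMap.congr_fun (mB ρM ρN ρ') t; simpa using this
  have dN : ∀ t : N ⊗[k] A, Dmap (map (inl k N M) (LinearMap.id : A →ₗ[k] A) t)
      = map (map (inl k N M) LinearMap.id) LinearMap.id (Dmap t) := by
    intro t; have := LinearMap.congr_fun (Dnat (k := k) (A := A) (inl k N M)) t
    simpa using this
  have dM : ∀ t : M ⊗[k] A, Dmap (map (inr k N M) (LinearMap.id : A →ₗ[k] A) t)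
      = map (map (inr k N M) LinearMap.id) LinearMap.id (Dmap t) := by
    intro t; have := LinearMap.congr_fun (Dnat (k := k) (A := A) (inr k N M)) t
    simpa using this
  apply LinearMap.ext; rintro ⟨n, m⟩
  have eN := LinearMap.congr_fun cN2 n
  have eM := LinearMap.congr_fun cM2 m
  have e2 := LinearMap.congr_fun c2 m
  simp only [comp_apply, LinearMap.add_apply] at eN eM e2
  simp only [comp_apply, sumCo_apply, map_add, mAe, mBe, dN, dM, eN, eM]
  rw [← e2]
  simp only [map_add]
  abel

lemma c2_of_coassoc
    (h : map (sumCo k A ρM ρN ρ') LinearMap.id ∘ₗ sumCo k A ρM ρN ρ'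
      = Dmap ∘ₗ sumCo k A ρM ρN ρ') :
    map ρ' LinearMap.id ∘ₗ ρM + map ρN LinearMap.id ∘ₗ ρ' = Dmap ∘ₗ ρ' := by
  have mAe : ∀ t : N ⊗[k] A, map (sumCo k A ρM ρN ρ') (LinearMap.id : A →ₗ[k] A) (map (inl k N M) LinearMap.id t)
      = map (map (inl k N M) LinearMap.id) LinearMap.id (map ρN LinearMap.id t) := by
    intro t; have := LinearMap.congr_fun (mA ρM ρN ρ') t; simpa using this
  have mBe : ∀ t : M ⊗[k] A, map (sumCo k A ρM ρN ρ') (LinearMap.id : A →ₗ[k] A) (map (inr k N M) LinearMap.id t)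
      = map (map (inl k N M) LinearMap.id) LinearMap.id (map ρ' LinearMap.id t)
        + map (map (inr k N M) LinearMap.id) LinearMap.id (map ρM LinearMap.id t) := by
    intro t; have := LinearMap.congr_fun (mB ρM ρN ρ') t; simpa using this
  have dN : ∀ t : N ⊗[k] A, Dmap (map (inl k N M) (LinearMap.id : A →ₗ[k] A) t)
      = map (map (inl k N M) LinearMap.id) LinearMap.id (Dmap t) := by
    intro t; have := LinearMap.congr_fun (Dnat (k := k) (A := A) (inl k N M)) t
    simpa using this
  have dM : ∀ t : M ⊗[k] A, Dmap (map (inr k N M) (LinearMap.id : A →ₗ[k] A) t)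
      = map (map (inr k N M) LinearMap.id) LinearMap.id (Dmap t) := by
    intro t; have := LinearMap.congr_fun (Dnat (k := k) (A := A) (inr k N M)) t
    simpa using this
  have kNN : ∀ t : (N ⊗[k] A) ⊗[k] A, map (map (fst k N M) (LinearMap.id : A →ₗ[k] A)) LinearMap.id
      (map (map (inl k N M) LinearMap.id) LinearMap.id t) = t := by
    intro t; have := LinearMap.congr_fun (killNN2 (k := k) (A := A) (M := M) (N := N)) t
    simpa using this
  have kNM : ∀ t : (M ⊗[k] A) ⊗[k] A, map (map (fst k N M) (LinearMap.id : A →ₗ[k] A)) LinearMap.id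
      (map (map (inr k N M) LinearMap.id) LinearMap.id t) = 0 := by
    intro t; have := LinearMap.congr_fun (killNM2 (k := k) (A := A) (M := M) (N := N)) t
    simpa using this
  apply LinearMap.ext; intro m
  have e := LinearMap.congr_fun h ((0 : N), m)
  simp only [comp_apply, sumCo_apply, map_zero, zero_add, map_add, mAe, mBe, dN, dM] at e
  have e2 := congrArg (map (map (fst k N M) (LinearMap.id : A →ₗ[k] A)) LinearMap.id) e
  simp only [map_add, kNN, kNM, add_zero] at e2
  simp only [comp_apply, LinearMap.add_apply]
  rw [add_comm]
  exact e2

end ExtAux4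

section ExtAux5
open TensorProduct LinearMap

variable {k : Type} [Field k] {A : Type} [Ring A] [Bialgebra k A]
variable {M N : Type} [AddCommGroup M] [Module k M] [AddCommGroup N] [Module k N]
variable (ωM : A ⊗[k] M →ₗ[k] M) (ρM : M →ₗ[k] M ⊗[k] A)
variable (ωN : A ⊗[k] N →ₗ[k] N) (ρN : N →ₗ[k] N ⊗[k] A)
variable (ω' : A ⊗[k] M →ₗ[k] N) (ρ' : M →ₗ[k] N ⊗[k] A)

lemma hargA : (sumCo k A ρM ρN ρ' ∘ₗ sumAct k A ωM ωN ω') ∘ₗ map LinearMap.id (inl k N M)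
    = map (inl k N M) LinearMap.id ∘ₗ (ρN ∘ₗ ωN) := by
  apply TensorProduct.ext'; intro a n
  simp [sumAct_apply, sumCo_apply]

lemma hargB : (sumCo k A ρM ρN ρ' ∘ₗ sumAct k A ωM ωN ω') ∘ₗ map LinearMap.id (inr k N M)
    = map (inl k N M) LinearMap.id ∘ₗ (ρN ∘ₗ ω')
      + (map (inl k N M) LinearMap.id ∘ₗ (ρ' ∘ₗ ωM)
        + map (inr k N M) LinearMap.id ∘ₗ (ρM ∘ₗ ωM)) := by
  apply TensorProduct.ext'; intro a m
  simp only [comp_apply, map_tmul, LinearMap.id_apply, LinearMap.add_apply, sumAct_apply, sumCo_apply,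
    inr_apply, inl_apply]
  simp [tmul_add, add_assoc]

lemma ydsum_inl :
    ydLHS k A (sumAct k A ωM ωN ω') (sumCo k A ρM ρN ρ') ∘ₗ map LinearMap.id (inl k N M)
      = map (inl k N M) LinearMap.id ∘ₗ Ymap (ρN ∘ₗ ωN) := by
  rw [ydLHS_eq, ← Yprecomp, hargA, Ynat]

lemma ydsum_inr :
    ydLHS k A (sumAct k A ωM ωN ω') (sumCo k A ρM ρN ρ') ∘ₗ map LinearMap.id (inr k N M)
      = map (inl k N M) LinearMap.id ∘ₗ Ymap (ρN ∘ₗ ω')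
        + (map (inl k N M) LinearMap.id ∘ₗ Ymap (ρ' ∘ₗ ωM)
          + map (inr k N M) LinearMap.id ∘ₗ Ymap (ρM ∘ₗ ωM)) := by
  rw [ydLHS_eq, ← Yprecomp, hargB, Yadd, Yadd, Ynat, Ynat, Ynat]

lemma hopfsum_inl :
    hopfRHS k A (sumAct k A ωM ωN ω') (sumCo k A ρM ρN ρ') ∘ₗ map LinearMap.id (inl k N M)
      = map (inl k N M) LinearMap.id ∘ₗ Lmap ωN ρN := by
  rw [hopfRHS_eq, ← Lprecomp, sumCo_inl, ← Lshift, sumAct_inl, Lpost]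

lemma hopfsum_inr :
    hopfRHS k A (sumAct k A ωM ωN ω') (sumCo k A ρM ρN ρ') ∘ₗ map LinearMap.id (inr k N M)
      = map (inl k N M) LinearMap.id ∘ₗ Lmap ωN ρ'
        + (map (inl k N M) LinearMap.id ∘ₗ Lmap ω' ρM
          + map (inr k N M) LinearMap.id ∘ₗ Lmap ωM ρM) := by
  rw [hopfRHS_eq, ← Lprecomp, sumCo_inr, Ladd_right, ← Lshift, ← Lshift, sumAct_inl,
    sumAct_inr, Lpost, Ladd_left, Lpost, Lpost]

lemma yd_sum (hM3 : ydLHS k A ωM ρM = hopfRHS k A ωM ρM)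
    (hN3 : ydLHS k A ωN ρN = hopfRHS k A ωN ρN)
    (c3 : Cocycle3YD k A ωM ρM ωN ρN ω' ρ') :
    ydLHS k A (sumAct k A ωM ωN ω') (sumCo k A ρM ρN ρ')
      = hopfRHS k A (sumAct k A ωM ωN ω') (sumCo k A ρM ρN ρ') := by
  have hM3' : Ymap (ρM ∘ₗ ωM) = Lmap ωM ρM := by
    rw [← ydLHS_eq, ← hopfRHS_eq]; exact hM3
  have hN3' : Ymap (ρN ∘ₗ ωN) = Lmap ωN ρN := by
    rw [← ydLHS_eq, ← hopfRHS_eq]; exact hN3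
  have c3' : Lmap ω' ρM + Lmap ωN ρ' = Ymap (ρ' ∘ₗ ωM) + Ymap (ρN ∘ₗ ω') := by
    have := c3
    rw [Cocycle3YD, mixLHS_eq, mixLHS'_eq, mixRHS_eq, mixRHS'_eq] at this
    exact this
  apply tensorRCases
  · rw [ydsum_inl, hopfsum_inl, hN3']
  · rw [ydsum_inr, hopfsum_inr, hM3']
    have e : map (inl k N M) (LinearMap.id : A →ₗ[k] A) ∘ₗ (Ymap (ρ' ∘ₗ ωM) + Ymap (ρN ∘ₗ ω'))
        = map (inl k N M) LinearMap.id ∘ₗ (Lmap ω' ρM + Lmap ωN ρ') := by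
      rw [← c3']
    simp only [LinearMap.comp_add] at e
    rw [← add_assoc, ← add_assoc,
      add_comm (map (inl k N M) (LinearMap.id : A →ₗ[k] A) ∘ₗ Ymap (ρN ∘ₗ ω'))
        (map (inl k N M) LinearMap.id ∘ₗ Ymap (ρ' ∘ₗ ωM)), e,
      add_comm (map (inl k N M) (LinearMap.id : A →ₗ[k] A) ∘ₗ Lmap ω' ρM)
        (map (inl k N M) LinearMap.id ∘ₗ Lmap ωN ρ')]

lemma c3_of_yd
    (h : ydLHS k A (sumAct k A ωM ωN ω') (sumCo k A ρM ρN ρ')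
      = hopfRHS k A (sumAct k A ωM ωN ω') (sumCo k A ρM ρN ρ')) :
    Cocycle3YD k A ωM ρM ωN ρN ω' ρ' := by
  have kNN : ∀ t : N ⊗[k] A, map (fst k N M) (LinearMap.id : A →ₗ[k] A)
      (map (inl k N M) LinearMap.id t) = t := by
    intro t; have := LinearMap.congr_fun (killNN (k := k) (A := A) (M := M) (N := N)) t
    simpa using this
  have kNM : ∀ t : M ⊗[k] A, map (fst k N M) (LinearMap.id : A →ₗ[k] A)
      (map (inr k N M) LinearMap.id t) = 0 := by
    intro t; have := LinearMap.congr_fun (killNM (k := k) (A := A) (M := M) (N := N)) t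
    simpa using this
  have h2 : ydLHS k A (sumAct k A ωM ωN ω') (sumCo k A ρM ρN ρ') ∘ₗ map LinearMap.id (inr k N M)
      = hopfRHS k A (sumAct k A ωM ωN ω') (sumCo k A ρM ρN ρ') ∘ₗ map LinearMap.id (inr k N M) := by
    rw [h]
  rw [ydsum_inr, hopfsum_inr] at h2
  have key : Ymap (ρ' ∘ₗ ωM) + Ymap (ρN ∘ₗ ω') = Lmap ω' ρM + Lmap ωN ρ' := by
    apply LinearMap.ext; intro z
    have e := LinearMap.congr_fun h2 z
    simp only [LinearMap.add_apply, comp_apply] at e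
    have e2 := congrArg (map (fst k N M) (LinearMap.id : A →ₗ[k] A)) e
    simp only [map_add, kNN, kNM, add_zero] at e2
    -- e2 : Ymap (ρN∘ω') z + Ymap (ρ'∘ωM) z = Lmap ωN ρ' z + Lmap ω' ρM z
    simp only [LinearMap.add_apply]
    rw [add_comm (Ymap (ρ' ∘ₗ ωM) z) (Ymap (ρN ∘ₗ ω') z), e2,
      add_comm (Lmap ωN ρ' z) (Lmap ω' ρM z)]
  rw [Cocycle3YD, mixLHS_eq, mixLHS'_eq, mixRHS_eq, mixRHS'_eq]
  rw [add_comm (Lmap ω' ρM) (Lmap ωN ρ'), add_comm (Ymap (ρ' ∘ₗ ωM)) (Ymap (ρN ∘ₗ ω'))] at key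
  rw [add_comm (Lmap ω' ρM) (Lmap ωN ρ'), add_comm (Ymap (ρ' ∘ₗ ωM)) (Ymap (ρN ∘ₗ ω'))]
  exact key.symm

end ExtAux5

section ExtAux6
open TensorProduct LinearMap

variable {k : Type} [Field k] {A : Type} [Ring A] [Bialgebra k A]
variable {M N : Type} [AddCommGroup M] [Module k M] [AddCommGroup N] [Module k N]
variable (ωM : A ⊗[k] M →ₗ[k] M) (ρM : M →ₗ[k] M ⊗[k] A)
variable (ωN : A ⊗[k] N →ₗ[k] N) (ρN : N →ₗ[k] N ⊗[k] A)
variable (ω' : A ⊗[k] M →ₗ[k] N) (ρ' : M →ₗ[k] N ⊗[k] A)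

lemma sumAct_snd : snd k N M ∘ₗ sumAct k A ωM ωN ω'
    = ωM ∘ₗ map LinearMap.id (snd k N M) := by
  apply TensorProduct.ext'; rintro a ⟨n, m⟩
  simp [sumAct_apply]

lemma sumCo_snd : ρM ∘ₗ snd k N M
    = map (snd k N M) LinearMap.id ∘ₗ sumCo k A ρM ρN ρ' := by
  apply LinearMap.ext; rintro ⟨n, m⟩
  have k1 : ∀ t : N ⊗[k] A, map (snd k N M) (LinearMap.id : A →ₗ[k] A)
      (map (inl k N M) LinearMap.id t) = 0 := by
    intro t
    induction t using TensorProduct.induction_on with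
    | zero => simp
    | tmul n a => simp
    | add u v hu hv => simp [hu, hv]
  have k2 : ∀ t : M ⊗[k] A, map (snd k N M) (LinearMap.id : A →ₗ[k] A)
      (map (inr k N M) LinearMap.id t) = t := by
    intro t
    induction t using TensorProduct.induction_on with
    | zero => simp
    | tmul n a => simp
    | add u v hu hv => simp [hu, hv]
  simp [sumCo_apply, k1, k2]

lemma transportYD {E X : Type} [AddCommGroup E] [Module k E] [AddCommGroup X] [Module k X]
    (φ : E ≃ₗ[k] X) (ωE : A ⊗[k] E →ₗ[k] E) (ρE : E →ₗ[k] E ⊗[k] A)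
    (ωX : A ⊗[k] X →ₗ[k] X) (ρX : X →ₗ[k] X ⊗[k] A)
    (h1 : φ.toLinearMap ∘ₗ ωE = ωX ∘ₗ map LinearMap.id φ.toLinearMap)
    (h2 : ρX ∘ₗ φ.toLinearMap = map φ.toLinearMap LinearMap.id ∘ₗ ρE)
    (hE : IsYetterDrinfeld k A ωE ρE) : IsYetterDrinfeld k A ωX ρX := by
  have hω : ∀ (a : A) (e : E), ωX (a ⊗ₜ[k] φ e) = φ (ωE (a ⊗ₜ[k] e)) := by
    intro a e
    have := LinearMap.congr_fun h1 (a ⊗ₜ[k] e)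
    simpa using this.symm
  have hρ : ∀ e : E, ρX (φ e) = map φ.toLinearMap LinearMap.id (ρE e) := by
    intro e
    have := LinearMap.congr_fun h2 e
    simpa using this
  obtain ⟨⟨hu, ha⟩, ⟨hc1, hc2⟩, h3⟩ := hE
  refine ⟨⟨?_, ?_⟩, ⟨?_, ?_⟩, ?_⟩
  · intro x
    obtain ⟨e, rfl⟩ := φ.surjective x
    rw [hω, hu]
  · intro a b x
    obtain ⟨e, rfl⟩ := φ.surjective x
    rw [hω, hω, hω, ha]
  · -- counit
    show Fc ∘ₗ ρX = LinearMap.id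
    have hc1' : Fc ∘ₗ ρE = LinearMap.id := hc1
    apply LinearMap.ext; intro x
    obtain ⟨e, rfl⟩ := φ.surjective x
    have f1 := LinearMap.congr_fun (Fnat (k := k) (A := A) φ.toLinearMap) (ρE e)
    have f2 := LinearMap.congr_fun hc1' e
    simp only [comp_apply, LinearMap.id_apply, LinearEquiv.coe_coe] at f1 f2 ⊢
    rw [hρ, f1, f2]
  · -- coassoc
    show map ρX LinearMap.id ∘ₗ ρX = Dmap ∘ₗ ρX
    have hc2' : map ρE LinearMap.id ∘ₗ ρE = Dmap ∘ₗ ρE := hc2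
    apply LinearMap.ext; intro x
    obtain ⟨e, rfl⟩ := φ.surjective x
    have m1 := LinearMap.congr_fun (mapL_comp (k := k) (A := A) ρX φ.toLinearMap) (ρE e)
    have m2 := LinearMap.congr_fun
      (mapL_comp (k := k) (A := A) (map φ.toLinearMap LinearMap.id) ρE) (ρE e)
    have d1 := LinearMap.congr_fun (Dnat (k := k) (A := A) φ.toLinearMap) (ρE e)
    have c2 := LinearMap.congr_fun hc2' e
    simp only [comp_apply, LinearEquiv.coe_coe] at m1 m2 d1 c2 ⊢
    rw [hρ, ← m1]
    rw [show ρX ∘ₗ φ.toLinearMap = map φ.toLinearMap LinearMap.id ∘ₗ ρE from h2, m2, c2, ← d1,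
      ← hρ]
  · -- YD condition
    have hρX : ρX = (map φ.toLinearMap LinearMap.id ∘ₗ ρE) ∘ₗ φ.symm.toLinearMap := by
      apply LinearMap.ext; intro x
      conv_lhs => rw [show x = φ (φ.symm x) from (φ.apply_symm_apply x).symm]
      simp only [comp_apply, LinearEquiv.coe_coe]
      rw [hρ]
    have harg : ρX ∘ₗ ωX
        = (map φ.toLinearMap LinearMap.id ∘ₗ (ρE ∘ₗ ωE)) ∘ₗ map LinearMap.id φ.symm.toLinearMap := by
      apply TensorProduct.ext'; intro a x
      conv_lhs => rw [show x = φ (φ.symm x) from (φ.apply_symm_apply x).symm]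
      simp only [comp_apply, LinearEquiv.coe_coe, map_tmul, LinearMap.id_apply]
      rw [hω, hρ]
    have h3' : Ymap (ρE ∘ₗ ωE) = Lmap ωE ρE := by
      rw [← ydLHS_eq, ← hopfRHS_eq]; exact h3
    rw [ydLHS_eq, hopfRHS_eq, harg, Yprecomp, Ynat, h3', hρX, Lprecomp, ← Lshift, ← h1, Lpost]

end ExtAux6


/-- For `(ω',ρ') ∈ Z^1(M,N)` the sequence
`0 → N → N ⊕_{(ω',ρ')} M → M → 0` is an extension of `M` by `N` in the category of
left-right Yetter-Drinfel'd modules, and every extension of `M` by `N` in this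
category is equivalent to one of this form. -/
theorem extension_classification (k : Type) [Field k] (A : Type) [Ring A] [Bialgebra k A]
    (M N : Type) [AddCommGroup M] [Module k M] [AddCommGroup N] [Module k N]
    (ωM : A ⊗[k] M →ₗ[k] M) (ρM : M →ₗ[k] M ⊗[k] A)
    (ωN : A ⊗[k] N →ₗ[k] N) (ρN : N →ₗ[k] N ⊗[k] A)
    (hM : IsYetterDrinfeld k A ωM ρM) (hN : IsYetterDrinfeld k A ωN ρN) :
    -- (a) the canonical sequence attached to a 1-cocycle is an extension:
    (∀ (ω' : A ⊗[k] M →ₗ[k] N) (ρ' : M →ₗ[k] N ⊗[k] A),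
      Z1YD k A ωM ρM ωN ρN ω' ρ' →
        IsYetterDrinfeld k A (sumAct k A ωM ωN ω') (sumCo k A ρM ρN ρ') ∧
        IsBicompatHom k A ωN ρN (sumAct k A ωM ωN ω') (sumCo k A ρM ρN ρ')
          (LinearMap.inl k N M) ∧
        IsBicompatHom k A (sumAct k A ωM ωN ω') (sumCo k A ρM ρN ρ') ωM ρM
          (LinearMap.snd k N M) ∧
        Function.Injective (LinearMap.inl k N M) ∧
        Function.Surjective (LinearMap.snd k N M) ∧
        LinearMap.range (LinearMap.inl k N M) = LinearMap.ker (LinearMap.snd k N M)) ∧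
    -- (b) every extension of `M` by `N` is equivalent to one of this form:
    (∀ (E : Type) [AddCommGroup E] [Module k E],
      ∀ (ωE : A ⊗[k] E →ₗ[k] E) (ρE : E →ₗ[k] E ⊗[k] A) (ι : N →ₗ[k] E) (π : E →ₗ[k] M),
      IsYetterDrinfeld k A ωE ρE →
      IsBicompatHom k A ωN ρN ωE ρE ι →
      IsBicompatHom k A ωE ρE ωM ρM π →
      Function.Injective ι → Function.Surjective π →
      LinearMap.range ι = LinearMap.ker π →
      ∃ (ω' : A ⊗[k] M →ₗ[k] N) (ρ' : M →ₗ[k] N ⊗[k] A),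
        Z1YD k A ωM ρM ωN ρN ω' ρ' ∧
        ∃ φ : E ≃ₗ[k] N × M,
          IsBicompatHom k A ωE ρE (sumAct k A ωM ωN ω') (sumCo k A ρM ρN ρ')
            φ.toLinearMap ∧
          φ.toLinearMap.comp ι = LinearMap.inl k N M ∧
          (LinearMap.snd k N M).comp φ.toLinearMap = π) := by
  constructor
  · -- part (a)
    intro ω' ρ' hz
    obtain ⟨c1, c2, c3⟩ := hz
    obtain ⟨hMmod, hMcom, hMyd⟩ := hM
    obtain ⟨hNmod, hNcom, hNyd⟩ := hN
    have heps : Fc ∘ₗ ρ' = 0 := eps_rho' ρM ρN ρ' hMcom.1 hNcom.1 c2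
    refine ⟨⟨?_, ⟨?_, ?_⟩, ?_⟩, ⟨?_, ?_⟩, ⟨?_, ?_⟩, ?_, ?_, ?_⟩
    · exact (isModule_sum_iff ωM ωN ω' hMmod hNmod).mpr c1
    · exact counit_sum ρM ρN ρ' hMcom.1 hNcom.1 heps
    · exact coassoc_sum ρM ρN ρ' hNcom.2 hMcom.2 c2
    · exact yd_sum ωM ρM ωN ρN ω' ρ' hMyd hNyd c3
    · exact (sumAct_inl ωM ωN ω').symm
    · exact sumCo_inl ρM ρN ρ'
    · exact sumAct_snd ωM ωN ω'
    · exact sumCo_snd ρM ρN ρ'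
    · exact LinearMap.inl_injective
    · exact LinearMap.snd_surjective
    · exact LinearMap.range_inl k N M
  · -- part (b)
    intro E _ _ ωE ρE ι π hYE hι hπ hinj hsurj hrange
    obtain ⟨s₀, hs₀⟩ := π.exists_rightInverse_of_surjective (LinearMap.range_eq_top.mpr hsurj)
    obtain ⟨r, hr⟩ := ι.exists_leftInverse_of_injective (LinearMap.ker_eq_bot.mpr hinj)
    set s : M →ₗ[k] E := s₀ - ι ∘ₗ (r ∘ₗ s₀) with hs
    have hre : ∀ n, r (ι n) = n := by
      intro n; have := LinearMap.congr_fun hr n; simpa using this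
    have hπιe : ∀ n, π (ι n) = 0 := by
      intro n
      have h1 : ι n ∈ LinearMap.ker π := by
        rw [← hrange]; exact LinearMap.mem_range_self ι n
      simpa using h1
    have hπse : ∀ m, π (s m) = m := by
      intro m
      have h1 := LinearMap.congr_fun hs₀ m
      simp only [LinearMap.comp_apply, LinearMap.id_apply] at h1
      simp [hs, hπιe, h1]
    have hrse : ∀ m, r (s m) = 0 := by
      intro m; simp [hs, hre]
    have hdec : ∀ e, ι (r e) + s (π e) = e := by
      intro e
      set z := e - ι (r e) - s (π e) with hz
      have hπz : π z = 0 := by simp [hz, hπιe, hπse]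
      have hzr : z ∈ LinearMap.range ι := by rw [hrange]; exact LinearMap.mem_ker.mpr hπz
      obtain ⟨w, hw⟩ := hzr
      have hrz : r z = 0 := by simp [hz, hre, hrse]
      have hw0 : w = 0 := by rw [← hre w, hw, hrz]
      rw [hw0] at hw
      have hz0 : z = 0 := by simpa using hw.symm
      rw [hz, sub_sub] at hz0
      exact (sub_eq_zero.mp hz0).symm
    have hfg : (LinearMap.prod r π) ∘ₗ (LinearMap.coprod ι s) = LinearMap.id := by
      apply LinearMap.ext; rintro ⟨n, m⟩
      simp [hre, hrse, hπιe, hπse]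
    have hgf : (LinearMap.coprod ι s) ∘ₗ (LinearMap.prod r π) = LinearMap.id := by
      apply LinearMap.ext; intro e
      simp [hdec e]
    set φ : E ≃ₗ[k] N × M :=
      LinearEquiv.ofLinear (LinearMap.prod r π) (LinearMap.coprod ι s) hfg hgf with hφ
    have hφapp : ∀ e, φ e = (r e, π e) := by intro e; simp [hφ]
    set ω' : A ⊗[k] M →ₗ[k] N := r ∘ₗ (ωE ∘ₗ map LinearMap.id s) with hω'
    set ρ' : M →ₗ[k] N ⊗[k] A := (map r LinearMap.id) ∘ₗ (ρE ∘ₗ s) with hρ'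
    have compat1 : φ.toLinearMap ∘ₗ ωE
        = sumAct k A ωM ωN ω' ∘ₗ map LinearMap.id φ.toLinearMap := by
      apply TensorProduct.ext'; intro a e
      have hsnd := LinearMap.congr_fun hπ.1 (a ⊗ₜ[k] e)
      simp only [LinearMap.comp_apply, map_tmul, LinearMap.id_apply] at hsnd
      have hsplit : ωE (a ⊗ₜ[k] e) = ωE (a ⊗ₜ[k] ι (r e)) + ωE (a ⊗ₜ[k] s (π e)) := by
        rw [← map_add, ← tmul_add, hdec e]
      have hιω := LinearMap.congr_fun hι.1 (a ⊗ₜ[k] (r e))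
      simp only [LinearMap.comp_apply, map_tmul, LinearMap.id_apply] at hιω
      simp only [LinearMap.comp_apply, map_tmul, LinearMap.id_apply, LinearEquiv.coe_coe, hφapp]
      rw [sumAct_apply]
      refine Prod.ext ?_ ?_
      · simp only
        rw [hsplit, map_add, ← hιω, hre]
        congr 1
      · simp only
        exact hsnd
    have hρsnd : ∀ e, ρM (π e) = map π LinearMap.id (ρE e) := by
      intro e; have := LinearMap.congr_fun hπ.2 e; simpa using this
    have hρι : ∀ n, map r LinearMap.id (ρE (ι n)) = ρN n := by
      intro n
      have h1 := LinearMap.congr_fun hι.2 n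
      simp only [LinearMap.comp_apply] at h1
      rw [h1]
      have h2 := LinearMap.congr_fun (mapL_comp (k := k) (A := A) r ι) (ρN n)
      simp only [LinearMap.comp_apply] at h2
      rw [← h2]
      have h3 : map (r ∘ₗ ι) (LinearMap.id : A →ₗ[k] A) = LinearMap.id := by
        rw [hr]; exact TensorProduct.map_id
      rw [h3, LinearMap.id_apply]
    have compat2 : sumCo k A ρM ρN ρ' ∘ₗ φ.toLinearMap
        = map φ.toLinearMap LinearMap.id ∘ₗ ρE := by
      apply LinearMap.ext; intro e
      have hprod : (φ.toLinearMap : E →ₗ[k] N × M)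
          = LinearMap.inl k N M ∘ₗ r + LinearMap.inr k N M ∘ₗ π := by
        apply LinearMap.ext; intro e'; simp [hφapp]
      have e1 := LinearMap.congr_fun (mapL_comp (k := k) (A := A) (LinearMap.inl k N M) r) (ρE e)
      have e2 := LinearMap.congr_fun (mapL_comp (k := k) (A := A) (LinearMap.inr k N M) π) (ρE e)
      simp only [LinearMap.comp_apply] at e1 e2
      have e3 : map r LinearMap.id (ρE e) = ρN (r e) + ρ' (π e) := by
        conv_lhs => rw [show ρE e = ρE (ι (r e)) + ρE (s (π e)) by rw [← map_add, hdec e]]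
        rw [map_add, hρι]
        congr 1
      simp only [LinearMap.comp_apply, LinearEquiv.coe_coe, hφapp]
      rw [sumCo_apply, hprod, TensorProduct.map_add_left]
      simp only [LinearMap.add_apply]
      rw [e1, e2, e3, map_add, ← hρsnd e]
    have compat3 : φ.toLinearMap ∘ₗ ι = LinearMap.inl k N M := by
      apply LinearMap.ext; intro n
      simp only [LinearMap.comp_apply, LinearEquiv.coe_coe, hφapp, hre, hπιe, LinearMap.inl_apply]
    have compat4 : LinearMap.snd k N M ∘ₗ φ.toLinearMap = π := by
      apply LinearMap.ext; intro e
      simp [hφapp]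
    have hSum : IsYetterDrinfeld k A (sumAct k A ωM ωN ω') (sumCo k A ρM ρN ρ') :=
      transportYD φ ωE ρE _ _ compat1 compat2 hYE
    refine ⟨ω', ρ', ⟨?_, ?_, ?_⟩, φ, ⟨compat1, compat2⟩, compat3, compat4⟩
    · exact (isModule_sum_iff ωM ωN ω' hM.1 hN.1).mp hSum.1
    · exact c2_of_coassoc ρM ρN ρ' hSum.2.1.2
    · exact c3_of_yd ωM ρM ωN ρN ω' ρ' hSum.2.2


end PS
end
end

section
/- Let A be a bialgebra and take M = N = k with trivial left-right Yetter-Drinfel'd module structure (a·λ = ε(a)λ and ρ(λ) = λ⊗1). Then the Yetter-Drinfel'd double complex (Y^{n,p}(k,k), d_m, d_c) specializes to the Gerstenhaber-Schack bicomplex of the bialgebra A: Y^{n,p}(k,k) = Hom(A^{⊗n}, A^{⊗p}), the horizontal faces are b_0(f)(a^1⊗...⊗a^{n+1}) = a^1·f(a^2⊗...⊗a^{n+1}) and b_{n+1}(f)(a^1⊗...⊗a^{n+1}) = f(a^1⊗...⊗a^n)·a^{n+1} (diagonal A-bimodule structure on A^{⊗p}) with b_i multiplying a^i a^{i+1} for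 1≤i≤n, and the vertical cofaces are c_0(f)(a^1⊗...⊗a^n) = Σ (a^1)_1...(a^n)_1 ⊗ f((a^1)_2⊗...⊗(a^n)_2), c_i = (applying Δ on the i-th position of the output) for 1≤i≤p, and c_{p+1}(f)(a^1⊗...⊗a^n) = Σ f((a^1)_1⊗...⊗(a^n)_1) ⊗ (a^1)_2...(a^n)_2. -/
open TensorProduct
noncomputable section

namespace PS

variable (k : Type) [Field k] (A : Type) [Ring A] [Bialgebra k A]

section GS

variable (k : Type) [Field k] (A : Type) [Ring A] [Bialgebra k A]

/-- The trivial left action of `A` on `k`: `a · λ = ε(a)λ`. -/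
def ωtriv : A ⊗[k] k →ₗ[k] k :=
  (TensorProduct.lid k k).toLinearMap.comp
    (TensorProduct.map (εA k A) (LinearMap.id : k →ₗ[k] k))

/-- The trivial right action of `A` on `k`: `λ · a = λ ε(a)`. -/
def ωtrivR : k ⊗[k] A →ₗ[k] k :=
  (TensorProduct.rid k k).toLinearMap.comp
    (TensorProduct.map (LinearMap.id : k →ₗ[k] k) (εA k A))

/-- The trivial coaction of `A` on `k`: `λ ↦ λ ⊗ 1`. -/
def ρtriv : k →ₗ[k] k ⊗[k] A :=
  (TensorProduct.map (LinearMap.id : k →ₗ[k] k) (Algebra.linearMap k A)).comp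
    (TensorProduct.rid k k).symm.toLinearMap

/-- Gerstenhaber-Schack cochains: `Hom(A^{⊗n}, A^{⊗p})`. -/
abbrev Gc (n p : ℕ) : Type := (Pk k A n : Type) →ₗ[k] (Pk k A p : Type)

/-- The Gerstenhaber-Schack horizontal faces (Hochschild-type), with the diagonal
left and right `A`-module structures on `A^{⊗p}`. -/
def bGS (n p : ℕ) (i : ℕ) (g : Gc k A n p) : Gc k A (n+1) p :=
  if i = 0 then
    (ldiag k A (ωtriv k A) p).comp
      ((TensorProduct.map (LinearMap.id : A →ₗ[k] A) g).comp
        (insP k A n).symm.toLinearMap)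
  else if i ≤ n then
    g.comp (mulP k A n i)
  else
    (rdiagAct k A (ωtrivR k A) p).comp
      (TensorProduct.map g (LinearMap.id : A →ₗ[k] A))

/-- The Gerstenhaber-Schack vertical cofaces (coHochschild-type). -/
def cGS (n p : ℕ) (j : ℕ) (g : Gc k A n p) : Gc k A n (p+1) :=
  if j = 0 then
    ((insP k A p).toLinearMap).comp
      ((TensorProduct.map (LinearMap.id : A →ₗ[k] A) g).comp (dL k A n))
  else if j ≤ p then
    (comulAt k A p j).comp g
  else
    (TensorProduct.map g (LinearMap.id : A →ₗ[k] A)).comp (dR k A n)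

/-- Identify `Y^{n,p}(k,k) = Hom(A^{⊗n} ⊗ k, k ⊗ A^{⊗p})` with `Hom(A^{⊗n}, A^{⊗p})`. -/
def toGc (n p : ℕ) (f : Yc k A k k n p) : Gc k A n p :=
  f.comp (TensorProduct.rid k (Pk k A n : Type)).symm.toLinearMap

end GS

section Aux

variable (k : Type) [Field k] (A : Type) [Ring A] [Bialgebra k A]

lemma assoc_tmul_one {V W : Type} [AddCommGroup V] [Module k V] [AddCommGroup W] [Module k W]
    (z : V ⊗[k] W) :
    (TensorProduct.assoc k V W k) (z ⊗ₜ[k] (1 : k)) =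
      TensorProduct.map (LinearMap.id : V →ₗ[k] V)
        (TensorProduct.rid k W).symm.toLinearMap z := by
  induction z using TensorProduct.induction_on with
  | zero => simp
  | tmul v w => simp
  | add x y hx hy => rw [add_tmul, map_add, hx, hy, map_add]

lemma map_id_map_id {V W₁ W₂ W₃ : Type} [AddCommGroup V] [Module k V]
    [AddCommGroup W₁] [Module k W₁] [AddCommGroup W₂] [Module k W₂]
    [AddCommGroup W₃] [Module k W₃]
    (φ : W₁ →ₗ[k] W₂) (ψ : W₂ →ₗ[k] W₃) (z : V ⊗[k] W₁) :
    TensorProduct.map (LinearMap.id : V →ₗ[k] V) ψ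
        (TensorProduct.map (LinearMap.id : V →ₗ[k] V) φ z) =
      TensorProduct.map (LinearMap.id : V →ₗ[k] V) (ψ.comp φ) z := by
  rw [← LinearMap.comp_apply, ← TensorProduct.map_comp, LinearMap.id_comp]

lemma rdiagE_eq : ∀ p : ℕ, rdiagE k A (N := k) p = rdiagAct k A (ωtrivR k A) p
  | 0 => rfl
  | p + 1 => by rw [rdiagE, rdiagAct, rdiagE_eq p]

lemma sum_counit_smul (a : A) {ι : Type*} (r : Coalgebra.Repr k a ι) :
    ∑ i ∈ r.index, (εA k A) (r.right i) • r.left i = a := by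
  have h := congrArg (TensorProduct.rid k A) (Coalgebra.sum_tmul_counit_eq (R := k) r)
  rw [map_sum] at h
  simp only [TensorProduct.rid_tmul, one_smul] at h
  exact h

lemma shift_insP : ∀ p : ℕ,
    ((shiftB k A (N := k) p).toLinearMap).comp
      ((rmulBase k A p).comp
        (((TensorProduct.comm k A
            (pwr k A (ModuleCat.of k ((k : Type) ⊗[k] A)) p : Type)).toLinearMap).comp
          (TensorProduct.map (LinearMap.id : A →ₗ[k] A) (rhoBase k A (ρtriv k A) p))))
    = (insP k A p).toLinearMap
  | 0 => by
    apply TensorProduct.ext'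
    intro a c
    show (TensorProduct.map (LinearMap.id : (k : Type) →ₗ[k] k) (μA k A))
        ((TensorProduct.assoc k (k : Type) A A)
          ((TensorProduct.comm k A ((k : Type) ⊗[k] A)) (a ⊗ₜ[k] ((ρtriv k A) c)))) =
      (TensorProduct.comm k A (k : Type)) (a ⊗ₜ[k] c)
    simp only [ρtriv, LinearMap.coe_comp, LinearEquiv.coe_coe]
    erw [Function.comp_apply, TensorProduct.rid_symm_apply]
    revert c
    intro (c : (k : Type))
    simp [LinearMap.mul'_apply]
  | p + 1 => by
    apply TensorProduct.ext'
    intro a t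
    induction t using TensorProduct.induction_on with
    | zero => erw [TensorProduct.tmul_zero, map_zero]
    | add x y hx hy => erw [TensorProduct.tmul_add, map_add, map_add, hx, hy]
    | tmul y b =>
      have IH := LinearMap.congr_fun (shift_insP p) (a ⊗ₜ[k] y)
      have IH' : (shiftB k A (N := k) p)
          ((rmulBase k A p)
            ((((rhoBase k A (ρtriv k A) p) y) ⊗ₜ[k] a))) = (insP k A p) (a ⊗ₜ[k] y) := IH
      show (TensorProduct.congr (shiftB k A (N := k) p) (LinearEquiv.refl k A))
          ((TensorProduct.map (rmulBase k A p) (LinearMap.id : A →ₗ[k] A))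
            ((TensorProduct.assoc k
                (pwr k A (ModuleCat.of k ((k : Type) ⊗[k] A)) p : Type) A A).symm
              ((TensorProduct.map
                  (LinearMap.id :
                    (pwr k A (ModuleCat.of k ((k : Type) ⊗[k] A)) p : Type) →ₗ[k] _)
                  (TensorProduct.comm k A A).toLinearMap)
                ((TensorProduct.assoc k
                    (pwr k A (ModuleCat.of k ((k : Type) ⊗[k] A)) p : Type) A A)
                  ((((rhoBase k A (ρtriv k A) p) y) ⊗ₜ[k] b) ⊗ₜ[k] a))))) =
        (TensorProduct.congr (insP k A p) (LinearEquiv.refl k A))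
          ((TensorProduct.assoc k A (Pk k A p : Type) A).symm (a ⊗ₜ[k] (y ⊗ₜ[k] b)))
      simp only [LinearEquiv.coe_coe, TensorProduct.assoc_tmul, TensorProduct.map_tmul,
        TensorProduct.comm_tmul, TensorProduct.assoc_symm_tmul, TensorProduct.congr_tmul,
        LinearMap.id_apply, LinearEquiv.refl_apply]
      rw [IH']

lemma toGc_face0 (n p : ℕ) (f : Yc k A k k n p) :
    toGc k A (n+1) p (face0 k A (ωtriv k A) n p f) =
      (ldiag k A (ωtriv k A) p).comp
        ((TensorProduct.map (LinearMap.id : A →ₗ[k] A) (toGc k A n p f)).comp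
          (insP k A n).symm.toLinearMap) := by
  apply LinearMap.ext; intro x
  show (ldiag k A (ωtriv k A) p)
      ((TensorProduct.map (LinearMap.id : A →ₗ[k] A) f)
        ((TensorProduct.assoc k A (Pk k A n : Type) (k : Type))
          (((insP k A n).symm x) ⊗ₜ[k] (1 : k)))) =
    (ldiag k A (ωtriv k A) p)
      ((TensorProduct.map (LinearMap.id : A →ₗ[k] A) (toGc k A n p f))
        ((insP k A n).symm x))
  rw [assoc_tmul_one, map_id_map_id]
  rfl

lemma toGc_faceMid (n p i : ℕ) (f : Yc k A k k n p) :
    toGc k A (n+1) p (faceMid k A n p i f) = (toGc k A n p f).comp (mulP k A n i) :=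
  LinearMap.ext fun _ => rfl

lemma toGc_faceLast (n p : ℕ) (f : Yc k A k k n p) :
    toGc k A (n+1) p (faceLastYD k A (ωtriv k A) n p f) =
      (rdiagAct k A (ωtrivR k A) p).comp
        (TensorProduct.map (toGc k A n p f) (LinearMap.id : A →ₗ[k] A)) := by
  rw [← rdiagE_eq]
  apply TensorProduct.ext'
  intro y a
  have r := Coalgebra.Repr.arbitrary k a
  show (rdiagE k A p)
      ((TensorProduct.comm k A (Cd k A k p))
        ((TensorProduct.map (LinearMap.id : A →ₗ[k] A)
            (f.comp (TensorProduct.map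
              (LinearMap.id : (Pk k A n : Type) →ₗ[k] _) (ωtriv k A))))
          ((TensorProduct.leftComm k (Pk k A n : Type) A (A ⊗[k] (k : Type)))
            ((TensorProduct.map (LinearMap.id : (Pk k A n : Type) →ₗ[k] _)
                (TensorProduct.assoc k A A (k : Type)).toLinearMap)
              ((TensorProduct.assoc k (Pk k A n : Type) (A ⊗[k] A) (k : Type))
                ((y ⊗ₜ[k] ((ΔA k A) a)) ⊗ₜ[k] (1 : k))))))) =
    (rdiagE k A p) ((f (y ⊗ₜ[k] (1:k))) ⊗ₜ[k] a)
  rw [show (ΔA k A) a = ∑ i ∈ r.index, r.left i ⊗ₜ[k] r.right i from r.eq.symm]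
  rw [TensorProduct.tmul_sum, TensorProduct.sum_tmul]
  rw [map_sum, map_sum, map_sum, map_sum, map_sum, map_sum]
  have step : ∀ i ∈ r.index,
      (rdiagE k A p)
        ((TensorProduct.comm k A (Cd k A k p))
          ((TensorProduct.map (LinearMap.id : A →ₗ[k] A)
              (f.comp (TensorProduct.map
                (LinearMap.id : (Pk k A n : Type) →ₗ[k] _) (ωtriv k A))))
            ((TensorProduct.leftComm k (Pk k A n : Type) A (A ⊗[k] (k : Type)))
              ((TensorProduct.map (LinearMap.id : (Pk k A n : Type) →ₗ[k] _)
                  (TensorProduct.assoc k A A (k : Type)).toLinearMap)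
                ((TensorProduct.assoc k (Pk k A n : Type) (A ⊗[k] A) (k : Type))
                  ((y ⊗ₜ[k] (r.left i ⊗ₜ[k] r.right i)) ⊗ₜ[k] (1 : k))))))) =
      (εA k A) (r.right i) • (rdiagE k A p) ((f (y ⊗ₜ[k] (1:k))) ⊗ₜ[k] r.left i) := by
    intro i _
    have hω : (ωtriv k A) (r.right i ⊗ₜ[k] (1 : k)) = (εA k A) (r.right i) := by
      simp [ωtriv]
    have hsm : (y ⊗ₜ[k] ((εA k A) (r.right i))) =
        (εA k A) (r.right i) • (y ⊗ₜ[k] (1 : k)) := by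
      rw [← TensorProduct.tmul_smul, smul_eq_mul, mul_one]
    simp only [LinearEquiv.coe_coe, LinearMap.coe_comp, Function.comp_apply,
      TensorProduct.assoc_tmul, TensorProduct.map_tmul, TensorProduct.leftComm_tmul,
      LinearMap.id_apply, hω, hsm, map_smul,
      TensorProduct.tmul_smul, TensorProduct.comm_tmul]
  rw [Finset.sum_congr rfl step]
  have this2 : ∀ i ∈ r.index,
      (εA k A) (r.right i) • (rdiagE k A p) ((f (y ⊗ₜ[k] (1:k))) ⊗ₜ[k] r.left i)
      = (rdiagE k A p) ((f (y ⊗ₜ[k] (1:k))) ⊗ₜ[k] ((εA k A) (r.right i) • r.left i)) := by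
    intro i _
    rw [TensorProduct.tmul_smul, map_smul]
  rw [Finset.sum_congr rfl this2, ← map_sum, ← TensorProduct.tmul_sum, sum_counit_smul]

lemma tttComm_key {V W : Type} [AddCommGroup V] [Module k V] [AddCommGroup W] [Module k W]
    (φ : (V ⊗[k] (k : Type)) →ₗ[k] W) (z : V ⊗[k] A) :
    TensorProduct.map φ (μA k A)
      ((TensorProduct.tensorTensorTensorComm k V A (k : Type) A)
        (z ⊗ₜ[k] ((1:k) ⊗ₜ[k] (1:A)))) =
    TensorProduct.map (φ.comp (TensorProduct.rid k V).symm.toLinearMap)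
      (LinearMap.id : A →ₗ[k] A) z := by
  induction z using TensorProduct.induction_on with
  | zero => simp
  | tmul v b =>
    simp [TensorProduct.tensorTensorTensorComm_tmul, LinearMap.mul'_apply]
  | add x y hx hy => rw [add_tmul, map_add, map_add, hx, hy, map_add]

lemma toGc_cofLast (n p : ℕ) (f : Yc k A k k n p) :
    toGc k A n (p+1) (cofLast k A (ρtriv k A) n p f) =
      (TensorProduct.map (toGc k A n p f) (LinearMap.id : A →ₗ[k] A)).comp (dR k A n) := by
  apply LinearMap.ext; intro x
  show (TensorProduct.map f (μA k A))
      ((TensorProduct.tensorTensorTensorComm k (Pk k A n : Type) A (k : Type) A)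
        ((dR k A n x) ⊗ₜ[k] ((ρtriv k A) (1:k)))) =
    (TensorProduct.map (toGc k A n p f) (LinearMap.id : A →ₗ[k] A)) (dR k A n x)
  rw [show (ρtriv k A) (1:k) = (1:k) ⊗ₜ[k] (1:A) by simp [ρtriv]]
  rw [tttComm_key]
  rfl

lemma toGc_cof0 (n p : ℕ) (f : Yc k A k k n p) :
    toGc k A n (p+1) (cof0YD k A (ρtriv k A) n p f) =
      ((insP k A p).toLinearMap).comp
        ((TensorProduct.map (LinearMap.id : A →ₗ[k] A) (toGc k A n p f)).comp (dL k A n)) := by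
  apply LinearMap.ext; intro x
  show (shiftB k A (N := k) p)
      ((rmulBase k A p)
        ((TensorProduct.comm k A
            (pwr k A (ModuleCat.of k ((k : Type) ⊗[k] A)) p : Type))
          ((TensorProduct.map (LinearMap.id : A →ₗ[k] A)
              ((rhoBase k A (ρtriv k A) p).comp f))
            ((TensorProduct.assoc k A (Pk k A n : Type) (k : Type))
              ((dL k A n x) ⊗ₜ[k] (1:k)))))) =
    (insP k A p)
      ((TensorProduct.map (LinearMap.id : A →ₗ[k] A) (toGc k A n p f)) ((dL k A n) x))
  rw [assoc_tmul_one, map_id_map_id]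
  rw [show ((rhoBase k A (ρtriv k A) p).comp f).comp
      (TensorProduct.rid k (Pk k A n : Type)).symm.toLinearMap
      = (rhoBase k A (ρtriv k A) p).comp (toGc k A n p f) from rfl]
  rw [← map_id_map_id]
  have h := LinearMap.congr_fun (shift_insP k A p)
    ((TensorProduct.map (LinearMap.id : A →ₗ[k] A) (toGc k A n p f)) ((dL k A n) x))
  simp only [LinearMap.coe_comp, LinearEquiv.coe_coe, Function.comp_apply] at h
  exact h

end Aux

/-- For `M = N = k` with the trivial Yetter-Drinfel'd structure, the
Yetter-Drinfel'd bicomplex specializes (under the canonical identification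
`Hom(A^{⊗n} ⊗ k, k ⊗ A^{⊗p}) ≅ Hom(A^{⊗n}, A^{⊗p})`) to the Gerstenhaber-Schack
bicomplex of the bialgebra `A`. -/
theorem yd_trivial_is_GS (k : Type) [Field k] (A : Type) [Ring A] [Bialgebra k A]
    (n p : ℕ) (f : Yc k A k k n p) :
    (∀ i ≤ n + 1,
      toGc k A (n+1) p (bYD k A (ωtriv k A) (ωtriv k A) n p i f) =
        bGS k A n p i (toGc k A n p f)) ∧
    (∀ j ≤ p + 1,
      toGc k A n (p+1) (cYD k A (ρtriv k A) (ρtriv k A) n p j f) =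
        cGS k A n p j (toGc k A n p f)) := by
  constructor
  · intro i hi
    by_cases h0 : i = 0
    · subst h0
      simp only [bYD, bGS, if_pos rfl]
      exact toGc_face0 k A n p f
    · by_cases hn : i ≤ n
      · simp only [bYD, bGS, if_neg h0, if_pos hn]
        exact toGc_faceMid k A n p i f
      · simp only [bYD, bGS, if_neg h0, if_neg hn]
        exact toGc_faceLast k A n p f
  · intro j hj
    by_cases h0 : j = 0
    · subst h0
      simp only [cYD, cGS, if_pos rfl]
      exact toGc_cof0 k A n p f
    · by_cases hp : j ≤ p
      · simp only [cYD, cGS, if_neg h0, if_pos hp, hp, ↓reduceIte]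
        rfl
      · simp only [cYD, cGS, if_neg h0, if_neg hp, h0, hp, ↓reduceIte]
        exact toGc_cofLast k A n p f


end PS
end
end

section
/- With M = V⊗A, N = W⊗A as above, every column of the Hopf-module double complex C^{n,p}(M,N) is acyclic: for p ≥ 0, if g ∈ C^{n,p+1}(M,N) satisfies d_c^{n,p+1}(g) = 0, then g = d_c^{n,p}(f) where f(a^1⊗...⊗a^n⊗v⊗a) = (id_W ⊗ ε ⊗ id_A^{⊗(p+1)})(g(a^1⊗...⊗a^n⊗v⊗a)). -/
open TensorProduct
noncomputable section

namespace PS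

variable (k : Type) [Field k] (A : Type) [Ring A] [Bialgebra k A]

section Free

variable (k : Type) [Field k] (A : Type) [Ring A] [Bialgebra k A]
variable (V : Type) [AddCommGroup V] [Module k V]

/-- The free Hopf-module action on `V ⊗ A`: `a · (v ⊗ b) = v ⊗ ab`. -/
def ωFree : A ⊗[k] (V ⊗[k] A) →ₗ[k] V ⊗[k] A :=
  (TensorProduct.map (LinearMap.id : V →ₗ[k] V) (μA k A)).comp
    (TensorProduct.leftComm k A V A).toLinearMap

/-- The free Hopf-module coaction on `V ⊗ A`: `ρ(v ⊗ a) = Σ v ⊗ a_1 ⊗ a_2`. -/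
def ρFree : V ⊗[k] A →ₗ[k] (V ⊗[k] A) ⊗[k] A :=
  ((TensorProduct.assoc k V A A).symm.toLinearMap).comp
    (TensorProduct.map (LinearMap.id : V →ₗ[k] V) (ΔA k A))

end Free

section Acyclic
set_option maxRecDepth 10000

variable (k : Type) [Field k] (A : Type) [Ring A] [Bialgebra k A]
variable (W : Type) [AddCommGroup W] [Module k W]

/-- The contracting homotopy for columns. -/
def Sm (p : ℕ) : (Cd k A (W ⊗[k] A) (p+1)) →ₗ[k] Cd k A (W ⊗[k] A) p :=
  ((shiftB k A p).symm.toLinearMap).comp (epsBase k A (p+1))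

lemma Sm_succ (p : ℕ) : Sm k A W (p+1) =
    TensorProduct.map (Sm k A W p) (LinearMap.id : A →ₗ[k] A) := by
  show (TensorProduct.map ((shiftB k A p).symm.toLinearMap)
      (LinearMap.id : A →ₗ[k] A)).comp
      (TensorProduct.map (epsBase k A (p+1)) (LinearMap.id : A →ₗ[k] A)) = _
  rw [← TensorProduct.map_comp, LinearMap.id_comp]
  rfl

lemma Sm_cof0 (p : ℕ) :
    (Sm k A W p).comp (((shiftB k A p).toLinearMap).comp
      (rhoBase k A (ρFree k A W) p)) = LinearMap.id := by
  induction p with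
  | zero =>
    apply TensorProduct.ext'
    intro w a
    have h : ∀ s : A ⊗[k] A,
        (TensorProduct.map (epsBase k A (0:ℕ) (N := W)) (LinearMap.id : A →ₗ[k] A))
          ((TensorProduct.assoc k W A A).symm (w ⊗ₜ s)) =
        w ⊗ₜ (TensorProduct.lid k A) ((LinearMap.rTensor A (εA k A)) s) := by
      intro s
      induction s using TensorProduct.induction_on with
      | zero =>
        simp [TensorProduct.tmul_zero]
        exact (map_zero _).trans (TensorProduct.tmul_zero _ _).symm
      | tmul x y =>
        show ((εA k A x) • w) ⊗ₜ[k] y = w ⊗ₜ[k] ((εA k A x) • y)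
        rw [TensorProduct.smul_tmul]
      | add s t hs ht =>
        simp [TensorProduct.tmul_add, hs, ht]
        exact (map_add _ _ _).trans (by rw [hs, ht]; exact (TensorProduct.tmul_add _ _ _).symm)
    show (TensorProduct.map (epsBase k A (0:ℕ) (N := W)) (LinearMap.id : A →ₗ[k] A))
        ((TensorProduct.assoc k W A A).symm (w ⊗ₜ (ΔA k A a))) = w ⊗ₜ a
    rw [h]
    rw [show (LinearMap.rTensor A (εA k A)) (ΔA k A a) = (1:k) ⊗ₜ a from
      Coalgebra.rTensor_counit_comul a]
    simp
    rfl
  | succ p ih =>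
    rw [Sm_succ]
    show (TensorProduct.map (Sm k A W p) (LinearMap.id : A →ₗ[k] A)).comp
      ((TensorProduct.map ((shiftB k A p).toLinearMap) (LinearMap.id : A →ₗ[k] A)).comp
        (TensorProduct.map (rhoBase k A (ρFree k A W) p) (LinearMap.id : A →ₗ[k] A))) = _
    rw [← TensorProduct.map_comp, ← TensorProduct.map_comp, ih]
    simp [TensorProduct.map_id]
    rfl

lemma Sm_comulAt_one (p : ℕ) :
    (Sm k A W (p+1)).comp (comulAt k A (p+1) 1 (N := W ⊗[k] A)) =
      ((shiftB k A p).toLinearMap).comp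
        ((rhoBase k A (ρFree k A W) p).comp (Sm k A W p)) := by
  induction p with
  | zero =>
    rw [Sm_succ]
    apply TensorProduct.ext'
    intro u a
    have h : ∀ s : A ⊗[k] A,
        (TensorProduct.map (Sm k A W 0) (LinearMap.id : A →ₗ[k] A))
          ((TensorProduct.assoc k (W ⊗[k] A) A A).symm (u ⊗ₜ s)) =
        (TensorProduct.assoc k W A A).symm ((epsBase k A (0:ℕ) (N := W) u) ⊗ₜ s) := by
      intro s
      induction s using TensorProduct.induction_on with
      | zero =>
        exact LinearMap.congr_fun (TensorProduct.ext' (fun x y => rfl) :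
          (TensorProduct.map (Sm k A W 0) (LinearMap.id : A →ₗ[k] A)).comp
            ((TensorProduct.assoc k (W ⊗[k] A) A A).symm.toLinearMap.comp (TensorProduct.mk k (W ⊗[k] A) (A ⊗[k] A) u)) =
          (TensorProduct.assoc k W A A).symm.toLinearMap.comp (TensorProduct.mk k W (A ⊗[k] A) (epsBase k A (0:ℕ) (N := W) u))) 0
      | tmul x y => rfl
      | add s t hs ht =>
        exact LinearMap.congr_fun (TensorProduct.ext' (fun x y => rfl) :
          (TensorProduct.map (Sm k A W 0) (LinearMap.id : A →ₗ[k] A)).comp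
            ((TensorProduct.assoc k (W ⊗[k] A) A A).symm.toLinearMap.comp (TensorProduct.mk k (W ⊗[k] A) (A ⊗[k] A) u)) =
          (TensorProduct.assoc k W A A).symm.toLinearMap.comp (TensorProduct.mk k W (A ⊗[k] A) (epsBase k A (0:ℕ) (N := W) u))) (s + t)
    show (TensorProduct.map (Sm k A W 0) (LinearMap.id : A →ₗ[k] A))
        ((TensorProduct.assoc k (W ⊗[k] A) A A).symm (u ⊗ₜ (ΔA k A a))) =
      (TensorProduct.assoc k W A A).symm ((epsBase k A (0:ℕ) (N := W) u) ⊗ₜ (ΔA k A a))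
    rw [h]
  | succ p ih =>
    rw [Sm_succ k A W (p+1)]
    show (TensorProduct.map (Sm k A W (p+1)) (LinearMap.id : A →ₗ[k] A)).comp
        (TensorProduct.map (comulAt k A (p+1) 1 (N := W ⊗[k] A))
          (LinearMap.id : A →ₗ[k] A)) = _
    rw [← TensorProduct.map_comp, ih, Sm_succ k A W p]
    show _ = (TensorProduct.map ((shiftB k A p).toLinearMap) (LinearMap.id : A →ₗ[k] A)).comp
      ((TensorProduct.map (rhoBase k A (ρFree k A W) p) (LinearMap.id : A →ₗ[k] A)).comp
        (TensorProduct.map (Sm k A W p) (LinearMap.id : A →ₗ[k] A)))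
    rw [← TensorProduct.map_comp, ← TensorProduct.map_comp]
    rfl

lemma comulAt_succ_ne (q i : ℕ) (h : i ≠ q + 1) :
    comulAt k A (q+1) i (N := W ⊗[k] A) =
      TensorProduct.map (comulAt k A q i (N := W ⊗[k] A)) (LinearMap.id : A →ₗ[k] A) := by
  rw [comulAt]; exact if_neg h

lemma comulAt_succ_eq (q : ℕ) :
    comulAt k A (q+1) (q+1) (N := W ⊗[k] A) =
      ((TensorProduct.assoc k (Cd k A (W ⊗[k] A) q) A A).symm.toLinearMap).comp
        (TensorProduct.map
          (LinearMap.id : (Cd k A (W ⊗[k] A) q) →ₗ[k] _) (ΔA k A)) := by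
  rw [comulAt]; exact if_pos rfl

lemma Sm_comulAt (p j : ℕ) (h1 : 1 ≤ j) (h2 : j ≤ p) :
    (Sm k A W (p+1)).comp (comulAt k A (p+1) (j+1) (N := W ⊗[k] A)) =
      (comulAt k A p j (N := W ⊗[k] A)).comp (Sm k A W p) := by
  induction p generalizing j with
  | zero => omega
  | succ q ih =>
    rcases Nat.lt_or_ge j (q+1) with hlt | hge
    · have hj : j ≤ q := by omega
      rw [comulAt_succ_ne k A W (q+1) (j+1) (by omega), Sm_succ k A W (q+1)]
      refine (TensorProduct.map_comp _ _ _ _).symm.trans ?_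
      rw [ih j h1 hj,
        comulAt_succ_ne k A W q j (by omega), Sm_succ k A W q]
      exact TensorProduct.map_comp _ _ _ _
    · have hj : j = q + 1 := by omega
      subst hj
      rw [comulAt_succ_eq k A W (q+1), comulAt_succ_eq k A W q]
      apply TensorProduct.ext'
      intro x a
      have h : ∀ s : A ⊗[k] A,
          Sm k A W (q+2)
            ((TensorProduct.assoc k (Cd k A (W ⊗[k] A) (q+1)) A A).symm (x ⊗ₜ s)) =
          (TensorProduct.assoc k (Cd k A (W ⊗[k] A) q) A A).symm
            ((Sm k A W q x) ⊗ₜ s) := by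
        intro s
        induction s using TensorProduct.induction_on with
        | zero =>
          simp [TensorProduct.tmul_zero]
          exact map_zero _
        | tmul y z => rfl
        | add s t hs ht =>
          simp [TensorProduct.tmul_add, hs, ht]
          exact (map_add _ _ _).trans (by rw [hs, ht]; rfl)
      show Sm k A W (q+2)
          ((TensorProduct.assoc k (Cd k A (W ⊗[k] A) (q+1)) A A).symm (x ⊗ₜ (ΔA k A a))) =
        (TensorProduct.assoc k (Cd k A (W ⊗[k] A) q) A A).symm
          ((Sm k A W q x) ⊗ₜ (ΔA k A a))
      rw [h]

lemma comp_sum'' {M N P : Type} [AddCommGroup M] [AddCommGroup N] [AddCommGroup P]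
    [Module k M] [Module k N] [Module k P] (F : N →ₗ[k] P) {ι : Type} (s : Finset ι)
    (f : ι → (M →ₗ[k] N)) : F.comp (∑ i ∈ s, f i) = ∑ i ∈ s, F.comp (f i) := by
  ext x; simp

lemma comp_zsmul'' {M N P : Type} [AddCommGroup M] [AddCommGroup N] [AddCommGroup P]
    [Module k M] [Module k N] [Module k P] (F : N →ₗ[k] P) (z : ℤ) (f : M →ₗ[k] N) :
    F.comp (z • f) = z • F.comp f := by
  ext x; simp

variable (V : Type) [AddCommGroup V] [Module k V]

lemma Sm_cH_zero (n p : ℕ) (g : Yc k A (V ⊗[k] A) (W ⊗[k] A) n (p+1)) :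
    (Sm k A W (p+1)).comp (cH k A (ρFree k A V) (ρFree k A W) n (p+1) 0 g) = g := by
  apply LinearMap.ext
  intro x
  exact LinearMap.congr_fun (Sm_cof0 k A W (p+1)) (g x)

lemma Sm_cH_succ (n p j : ℕ) (hj : j ≤ p + 1)
    (g : Yc k A (V ⊗[k] A) (W ⊗[k] A) n (p+1)) :
    (Sm k A W (p+1)).comp (cH k A (ρFree k A V) (ρFree k A W) n (p+1) (j+1) g) =
      cH k A (ρFree k A V) (ρFree k A W) n p j ((Sm k A W p).comp g) := by
  rcases Nat.eq_zero_or_pos j with h0 | hpos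
  · subst h0
    simp only [cH, if_neg (show ¬(0+1 = 0) by omega), if_pos (show 0+1 ≤ p+1 by omega),
      eq_self_iff_true, if_true, cof0H]
    apply LinearMap.ext
    intro x
    exact LinearMap.congr_fun (Sm_comulAt_one k A W p) (g x)
  · rcases Nat.lt_or_ge j (p+1) with hlt | hge
    · -- 1 ≤ j ≤ p : middle faces
      simp only [cH, if_neg (show ¬(j+1 = 0) by omega), if_pos (show j+1 ≤ p+1 by omega),
        if_neg (show ¬(j = 0) by omega), if_pos (show j ≤ p by omega)]
      apply LinearMap.ext
      intro x
      exact LinearMap.congr_fun (Sm_comulAt k A W p j hpos (by omega)) (g x)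
    · -- j = p+1 : last coface
      have hjj : j = p + 1 := by omega
      subst hjj
      simp only [cH, if_neg (show ¬(p+1+1 = 0) by omega),
        if_neg (show ¬(p+1+1 ≤ p+1) by omega),
        if_neg (show ¬(p+1 = 0) by omega), if_neg (show ¬(p+1 ≤ p) by omega)]
      have key : (Sm k A W (p+1)).comp
          (TensorProduct.map g (μA k A)) =
          TensorProduct.map ((Sm k A W p).comp g) (μA k A) := by
        rw [Sm_succ]
        exact (TensorProduct.map_comp _ _ _ _).symm
      simp only [cofLast]
      apply LinearMap.ext
      intro x
      exact LinearMap.congr_fun key _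

end Acyclic
/-- For free Hopf modules `M = V ⊗ A`, `N = W ⊗ A`, every column of
the Hopf-module bicomplex is acyclic: if `d_c^{n,p+1}(g) = 0` then `g = d_c^{n,p}(f)`
with `f = (id_W ⊗ ε ⊗ id^{⊗(p+1)}) ∘ g`. -/
theorem columns_acyclic (k : Type) [Field k] (A : Type) [Ring A] [Bialgebra k A]
    (V W : Type) [AddCommGroup V] [Module k V] [AddCommGroup W] [Module k W]
    (n p : ℕ) (g : Yc k A (V ⊗[k] A) (W ⊗[k] A) n (p+1))
    (hg : dcH k A (ρFree k A V) (ρFree k A W) n (p+1) g = 0) :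
    dcH k A (ρFree k A V) (ρFree k A W) n p
      (((shiftB k A p).symm.toLinearMap).comp ((epsBase k A (p+1)).comp g)) = g := by
  show dcH k A (ρFree k A V) (ρFree k A W) n p ((Sm k A W p).comp g) = g
  have key : (Sm k A W (p+1)).comp (dcH k A (ρFree k A V) (ρFree k A W) n (p+1) g) =
      g - dcH k A (ρFree k A V) (ρFree k A W) n p ((Sm k A W p).comp g) := by
    rw [dcH, comp_sum'', Finset.sum_range_succ']
    have e0 : (Sm k A W (p+1)).comp
        (((-1:ℤ)^(0:ℕ)) • cH k A (ρFree k A V) (ρFree k A W) n (p+1) 0 g) = g := by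
      rw [pow_zero, one_smul]
      exact Sm_cH_zero k A W V n p g
    rw [e0]
    have e1 : ∀ j ∈ Finset.range (p+2),
        (Sm k A W (p+1)).comp
          (((-1:ℤ)^(j+1)) • cH k A (ρFree k A V) (ρFree k A W) n (p+1) (j+1) g) =
        -(((-1:ℤ)^j) • cH k A (ρFree k A V) (ρFree k A W) n p j ((Sm k A W p).comp g)) := by
      intro j hj
      rw [comp_zsmul'' k, Sm_cH_succ k A W V n p j
        (Nat.lt_succ_iff.mp (Finset.mem_range.mp hj)) g, pow_succ, mul_comm, neg_one_mul,
        neg_smul]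
    rw [Finset.sum_congr rfl e1, Finset.sum_neg_distrib, dcH, neg_add_eq_sub]
  rw [hg, LinearMap.comp_zero] at key
  exact (sub_eq_zero.mp key.symm).symm

end PS
end
end
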